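/- arXiv:1506.04455 — 6 statements merged into one kernel-verified Lean document; each statement's English description precedes it below -/
import Mathlib

section
/- Let p be a nonzero Laurent polynomial in two variables over ℤ and suppose there are integers m and n such that coeff p (i, j) = coeff p (m − i, n − j) for all (i, j) ∈ ℤ × ℤ (i.e. p(x, y) = x^m y^n p(x^{-1}, y^{-1})). Then: (a) the y-breadth of p is congruent to n modulo 2; and (b) if the specialization p(1, y) is nonzero, then the breadth of p(1, y) is congruent to the y-breadth of p modulo 2. (This is the key computational step of Lemma 2.2 of the paper: after normalizing, the y-coefficients a_i(x) of p satisfy a_i(x) = x^m a_{n-i}(x^{-1}), hence a_i(1) = a_{n-i}(1), so br_y(p) ≡ br(p(1,y)) (mod 2).) -/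
/-- For a nonempty finset of integers stable under `j ↦ n - j`,
the max plus the min equals `n`. -/
lemma symmFinset_max_add_min {n : ℤ} {T : Finset ℤ} (hT : T.Nonempty)
    (h : ∀ j, j ∈ T → n - j ∈ T) :
    T.max.unbotD 0 + T.min.untopD 0 = n := by
  rw [← Finset.coe_max' hT, ← Finset.coe_min' hT]
  simp only [WithBot.unbotD_coe, WithTop.untopD_coe]
  have h1 : T.max' hT ≤ n - T.min' hT := by
    apply Finset.max'_le
    intro x hx
    have := Finset.min'_le T _ (h x hx)
    omega
  have h2 : n - T.min' hT ≤ T.max' hT :=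
    Finset.le_max' T _ (h _ (T.min'_mem hT))
  omega

/-- The maximum `y`-exponent appearing in a two-variable Laurent polynomial
(junk value `0` for the zero polynomial). -/
noncomputable def ymax (p : AddMonoidAlgebra ℤ (ℤ × ℤ)) : ℤ :=
  ((p.coeff.support.image Prod.snd).max).unbotD 0

/-- The minimum `y`-exponent appearing in a two-variable Laurent polynomial
(junk value `0` for the zero polynomial). -/
noncomputable def ymin (p : AddMonoidAlgebra ℤ (ℤ × ℤ)) : ℤ :=
  ((p.coeff.support.image Prod.snd).min).untopD 0

/-- The `y`-breadth of a two-variable Laurent polynomial. -/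
noncomputable def ybreadth (p : AddMonoidAlgebra ℤ (ℤ × ℤ)) : ℤ := ymax p - ymin p

/-- The breadth of a one-variable Laurent polynomial:
maximum degree minus minimum degree of its support. -/
noncomputable def breadth (q : AddMonoidAlgebra ℤ ℤ) : ℤ :=
  (q.coeff.support.max).unbotD 0 - (q.coeff.support.min).untopD 0

/-- The specialization `p(1, y)`: the one-variable Laurent polynomial whose coefficient
of `y^j` is `Σ_i coeff p (i, j)`. -/
noncomputable def specOne (p : AddMonoidAlgebra ℤ (ℤ × ℤ)) : AddMonoidAlgebra ℤ ℤ :=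
  AddMonoidAlgebra.ofCoeff (Finsupp.mapDomain Prod.snd p.coeff)

/-- If a nonzero two-variable Laurent polynomial `p` over `ℤ` satisfies
`coeff p (i, j) = coeff p (m − i, n − j)` for all `(i, j)` (i.e.
`p(x, y) = x^m y^n p(x⁻¹, y⁻¹)`), then (a) the `y`-breadth of `p` is congruent to
`n` modulo `2`, and (b) if `p(1, y) ≠ 0`, then the breadth of `p(1, y)` is congruent
to the `y`-breadth of `p` modulo `2`. -/
theorem ybreadth_parity_of_symmetric (p : AddMonoidAlgebra ℤ (ℤ × ℤ)) (hp : p ≠ 0)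
    (m n : ℤ) (hsym : ∀ i j : ℤ, p.coeff (i, j) = p.coeff (m - i, n - j)) :
    ybreadth p ≡ n [ZMOD 2] ∧
      (specOne p ≠ 0 → breadth (specOne p) ≡ ybreadth p [ZMOD 2]) := by
  have hSne : (p.coeff.support.image Prod.snd).Nonempty :=
    (Finsupp.support_nonempty_iff.mpr (mt AddMonoidAlgebra.coeff_eq_zero.mp hp)).image _
  have hSsym : ∀ j, j ∈ p.coeff.support.image Prod.snd → n - j ∈ p.coeff.support.image Prod.snd := by
    intro j hj
    simp only [Finset.mem_image, Finsupp.mem_support_iff] at hj ⊢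
    obtain ⟨⟨i, j'⟩, hij, rfl⟩ := hj
    exact ⟨(m - i, n - j'), by rw [← hsym i j']; exact hij, rfl⟩
  have hsum : ymax p + ymin p = n := symmFinset_max_add_min hSne hSsym
  have ha : ybreadth p ≡ n [ZMOD 2] := by
    show (ybreadth p) % 2 = n % 2
    unfold ybreadth at *
    omega
  refine ⟨ha, fun hq => ?_⟩
  have hfinj : Function.Injective (fun x : ℤ × ℤ => (m - x.1, n - x.2)) := by
    intro a b hab
    simp only [Prod.mk.injEq, Prod.ext_iff] at hab ⊢
    omega
  have he : p.coeff = Finsupp.mapDomain (fun x : ℤ × ℤ => (m - x.1, n - x.2)) p.coeff := by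
    ext ⟨i, j⟩
    have h1 : Finsupp.mapDomain (fun x : ℤ × ℤ => (m - x.1, n - x.2)) p.coeff (i, j)
        = p.coeff (m - i, n - j) := by
      have := Finsupp.mapDomain_apply hfinj p.coeff (m - i, n - j)
      simpa using this
    rw [h1, hsym]
  have hginj : Function.Injective (fun j : ℤ => n - j) := by
    intro a b hab
    have : n - a = n - b := hab
    omega
  have key : (specOne p).coeff = Finsupp.mapDomain (fun j : ℤ => n - j) (specOne p).coeff := by
    unfold specOne
    simp only [AddMonoidAlgebra.coeff_ofCoeff]
    conv_lhs => rw [he]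
    rw [← Finsupp.mapDomain_comp, ← Finsupp.mapDomain_comp]
    rfl
  have hspec : ∀ j, (specOne p).coeff j = (specOne p).coeff (n - j) := by
    intro j
    conv_rhs => rw [key]
    have : (n - j) = (fun j : ℤ => n - j) j := rfl
    rw [this, Finsupp.mapDomain_apply hginj]
  have hTne : (specOne p).coeff.support.Nonempty :=
    Finsupp.support_nonempty_iff.mpr (mt AddMonoidAlgebra.coeff_eq_zero.mp hq)
  have hTsym : ∀ j, j ∈ (specOne p).coeff.support → n - j ∈ (specOne p).coeff.support := by
    intro j hj
    simp only [Finsupp.mem_support_iff] at hj ⊢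
    rw [← hspec j]; exact hj
  have hsum2 : (specOne p).coeff.support.max.unbotD 0 + (specOne p).coeff.support.min.untopD 0 = n :=
    symmFinset_max_add_min hTne hTsym
  show (breadth (specOne p)) % 2 = (ybreadth p) % 2
  unfold breadth ybreadth at *
  omega
end

section
/- Let s ≥ 4 and b′ be integers and let r_1, …, r_{s−1} be rationals with 0 < r_i < 1 for all i. Assume JN(b′, (r_1, …, r_{s−1})) holds (so in particular −(s−2) ≤ b′ ≤ −1). Then: (1) if −(s−3) ≤ b′ ≤ −2, then JN(b′, (r_1, …, r_{s−1}, r)) holds for every rational 0 < r < 1 and JN(b′−1, (r_1, …, r_{s−1}, r+1)) holds for every rational −1 < r < 0; (2) if b′ = −1, then there is a rational ε > 0 such that JN(b′, (r_1, …, r_{s−1}, r)) holds for every rational 0 < r < ε, and JN(b′−1, (r_1, …, r_{s−1}, r+1)) holds for every rational −1 < r < 0; (3) if b′ = −(s−2), then JN(b′, (r_1, …, r_{s−1}, r)) holds for every rational 0 < r < 1, and there is a rational ε > 0 such that JN(b′−1, (r_1, …, r_{s−1}, r+1)) holds for every rational −ε < r < 0. (This is Lemma 5.5 (rc_integer) of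 the paper: if S²(b′; r_1, …, r_{s−1}) is not an L-space, then S²(b′; r_1, …, r_{s−1}, r) is not an L-space for the stated ranges of r in (−1, 1).) -/
theorem List.eq_of_perm_of_sorted {α : Type*} {r : α → α → Prop} [Std.Antisymm r]
    {l₁ l₂ : List α} (hp : l₁.Perm l₂) (h₁ : l₁.Pairwise r) (h₂ : l₂.Pairwise r) : l₁ = l₂ :=
  List.Perm.eq_of_pairwise' h₁ h₂ hp

lemma msort_sorted (R : List ℚ) : (R.mergeSort (· ≤ ·)).Pairwise (· ≤ ·) :=
  List.pairwise_mergeSort' _ R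

lemma msort_cons (R : List ℚ) (r : ℚ) (h : ∀ x ∈ R, r ≤ x) :
    (R ++ [r]).mergeSort (· ≤ ·) = r :: R.mergeSort (· ≤ ·) := by
  apply List.eq_of_perm_of_sorted (r := (· ≤ · : ℚ → ℚ → Prop))
  · exact (List.mergeSort_perm _ _).trans ((List.perm_append_singleton _ _).trans
      (List.Perm.cons r (List.mergeSort_perm R _).symm))
  · exact msort_sorted _
  · exact List.pairwise_cons.2 ⟨fun x hx => h x ((List.mergeSort_perm R _).mem_iff.1 hx),
      msort_sorted R⟩

lemma msort_append (R : List ℚ) (r : ℚ) (h : ∀ x ∈ R, x ≤ r) :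
    (R ++ [r]).mergeSort (· ≤ ·) = R.mergeSort (· ≤ ·) ++ [r] := by
  apply List.eq_of_perm_of_sorted (r := (· ≤ · : ℚ → ℚ → Prop))
  · exact (List.mergeSort_perm _ _).trans ((List.mergeSort_perm R _).symm.append_right [r])
  · exact msort_sorted _
  · exact List.pairwise_append.2 ⟨msort_sorted R, List.pairwise_singleton _ r,
      fun x hx y hy => by
        simp only [List.mem_singleton] at hy; subst hy
        exact h x ((List.mergeSort_perm R _).mem_iff.1 hx)⟩

lemma msort_len (R : List ℚ) : (R.mergeSort (· ≤ ·)).length = R.length :=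
  (List.mergeSort_perm R _).length_eq

lemma msort_mem (R : List ℚ) {x : ℚ} : x ∈ R.mergeSort (· ≤ ·) ↔ x ∈ R :=
  (List.mergeSort_perm R _).mem_iff

/-- The Jankins–Neumann/Eisenbud–Hirsch–Neumann arithmetic criterion: `JN b R` holds
exactly when the Seifert fibered space `S²(b; r_1, …, r_s)` (where `R = (r_1, …, r_s)`
with `0 < r_i < 1`) is *not* an L-space. Here `r_{(1)} ≤ ⋯ ≤ r_{(s)}` denotes the
nondecreasing rearrangement of `R`, realized as the sorted list `S` (0-indexed). -/
def JN (b : ℤ) (R : List ℚ) : Prop :=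
  let s := R.length
  let S := R.mergeSort (· ≤ ·)
  (-((s : ℤ) - 2) ≤ b ∧ b ≤ -2) ∨
  (b = -1 ∧ ∃ a k : ℕ, 0 < a ∧ a < k ∧ 2 * a ≤ k ∧ Nat.Coprime a k ∧
    (∀ i : ℕ, i < s - 2 → S.getD i 0 < 1 / (k : ℚ)) ∧
    S.getD (s - 2) 0 < (a : ℚ) / (k : ℚ) ∧
    S.getD (s - 1) 0 < ((k : ℚ) - (a : ℚ)) / (k : ℚ)) ∨
  (b = -((s : ℤ) - 1) ∧ ∃ a k : ℕ, 0 < a ∧ a < k ∧ 2 * a ≤ k ∧ Nat.Coprime a k ∧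
    (∀ i : ℕ, i < s - 2 → 1 - S.getD (i + 2) 0 < 1 / (k : ℚ)) ∧
    1 - S.getD 1 0 < (a : ℚ) / (k : ℚ) ∧
    1 - S.getD 0 0 < ((k : ℚ) - (a : ℚ)) / (k : ℚ))

lemma JN_first {b : ℤ} {R : List ℚ} (h1 : -((R.length : ℤ) - 2) ≤ b) (h2 : b ≤ -2) :
    JN b R := Or.inl ⟨h1, h2⟩

lemma JN_second {b : ℤ} {R : List ℚ} (hb : b = -1) {a k : ℕ} (ha : 0 < a) (hak : a < k)
    (h2a : 2 * a ≤ k) (hco : Nat.Coprime a k)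
    (h1 : ∀ i : ℕ, i < R.length - 2 → (R.mergeSort (· ≤ ·)).getD i 0 < 1 / (k : ℚ))
    (h2 : (R.mergeSort (· ≤ ·)).getD (R.length - 2) 0 < (a : ℚ) / (k : ℚ))
    (h3 : (R.mergeSort (· ≤ ·)).getD (R.length - 1) 0 < ((k : ℚ) - (a : ℚ)) / (k : ℚ)) :
    JN b R := Or.inr (Or.inl ⟨hb, a, k, ha, hak, h2a, hco, h1, h2, h3⟩)

lemma JN_third {b : ℤ} {R : List ℚ} (hb : b = -((R.length : ℤ) - 1)) {a k : ℕ} (ha : 0 < a)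
    (hak : a < k) (h2a : 2 * a ≤ k) (hco : Nat.Coprime a k)
    (h1 : ∀ i : ℕ, i < R.length - 2 → 1 - (R.mergeSort (· ≤ ·)).getD (i + 2) 0 < 1 / (k : ℚ))
    (h2 : 1 - (R.mergeSort (· ≤ ·)).getD 1 0 < (a : ℚ) / (k : ℚ))
    (h3 : 1 - (R.mergeSort (· ≤ ·)).getD 0 0 < ((k : ℚ) - (a : ℚ)) / (k : ℚ)) :
    JN b R := Or.inr (Or.inr ⟨hb, a, k, ha, hak, h2a, hco, h1, h2, h3⟩)

/-- Lemma 5.5 (rc_integer) of the paper, stated via the arithmetic criterion `JN`: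
if `S²(b′; r_1, …, r_{s−1})` is not an L-space (i.e. `JN b′ R` holds, where
`R = (r_1, …, r_{s−1})` has entries in `(0,1)` and `s ≥ 4`), then
`S²(b′; r_1, …, r_{s−1}, r)` is not an L-space for the stated ranges of `r ∈ (−1, 1)`,
using `S²(b′; …, r) = S²(b′−1; …, r+1)` for `−1 < r < 0`. -/
theorem rc_integer (s : ℕ) (hs : 4 ≤ s) (b' : ℤ) (R : List ℚ)
    (hlen : R.length = s - 1) (hR : ∀ r ∈ R, 0 < r ∧ r < 1)
    (h : JN b' R) :
    ((-((s : ℤ) - 3) ≤ b' ∧ b' ≤ -2) →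
      ∀ r : ℚ, ((0 < r ∧ r < 1) → JN b' (R ++ [r])) ∧
               ((-1 < r ∧ r < 0) → JN (b' - 1) (R ++ [r + 1]))) ∧
    (b' = -1 →
      (∃ ε : ℚ, 0 < ε ∧ ∀ r : ℚ, 0 < r → r < ε → JN b' (R ++ [r])) ∧
      (∀ r : ℚ, -1 < r → r < 0 → JN (b' - 1) (R ++ [r + 1]))) ∧
    (b' = -((s : ℤ) - 2) →
      (∀ r : ℚ, 0 < r → r < 1 → JN b' (R ++ [r])) ∧
      (∃ ε : ℚ, 0 < ε ∧ ∀ r : ℚ, -ε < r → r < 0 → JN (b' - 1) (R ++ [r + 1]))) := by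
  have hRpos : 0 < R.length := by omega
  have hLapp : ∀ x : ℚ, (R ++ [x]).length = s := by
    intro x; simp [hlen]; omega
  refine ⟨?_, ?_, ?_⟩
  · -- Case A
    rintro ⟨hb1, hb2⟩ r
    constructor
    · rintro ⟨hr0, hr1⟩
      refine JN_first ?_ hb2
      rw [hLapp]; omega
    · rintro ⟨hr0, hr1⟩
      refine JN_first ?_ (by omega)
      rw [hLapp]; omega
  · -- Case B : b' = -1
    intro hb
    have h2 : ∃ a k : ℕ, 0 < a ∧ a < k ∧ 2 * a ≤ k ∧ Nat.Coprime a k ∧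
        (∀ i : ℕ, i < R.length - 2 → (R.mergeSort (· ≤ ·)).getD i 0 < 1 / (k : ℚ)) ∧
        (R.mergeSort (· ≤ ·)).getD (R.length - 2) 0 < (a : ℚ) / (k : ℚ) ∧
        (R.mergeSort (· ≤ ·)).getD (R.length - 1) 0 < ((k : ℚ) - (a : ℚ)) / (k : ℚ) := by
      rcases h with ⟨_, hB⟩ | ⟨_, hsec⟩ | ⟨hb3, _⟩
      · omega
      · exact hsec
      · rw [hlen] at hb3; omega
    obtain ⟨a, k, ha, hak, h2a, hco, hsm, hm2, hm1⟩ := h2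
    have hk0 : (0 : ℚ) < (k : ℚ) := Nat.cast_pos.2 (by omega)
    constructor
    · -- small r
      set m := List.minimum_of_length_pos hRpos with hm
      have hmpos : 0 < m := (hR m (List.minimum_of_length_pos_mem hRpos)).1
      refine ⟨min (1 / (k : ℚ)) m, lt_min (by positivity) hmpos, ?_⟩
      intro r hr0 hrε
      have hrk : r < 1 / (k : ℚ) := lt_of_lt_of_le hrε (min_le_left _ _)
      have hrall : ∀ x ∈ R, r ≤ x := fun x hx =>
        le_of_lt (lt_of_lt_of_le (lt_of_lt_of_le hrε (min_le_right _ _))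
          (List.minimum_of_length_pos_le_of_mem hx hRpos))
      have hsort := msort_cons R r hrall
      refine JN_second hb ha hak h2a hco ?_ ?_ ?_
      · intro i hi
        rw [hLapp] at hi
        rw [hsort]
        match i with
        | 0 => rw [List.getD_cons_zero]; exact hrk
        | Nat.succ j =>
          rw [List.getD_cons_succ]
          exact hsm j (by omega)
      · rw [hsort, hLapp, show s - 2 = (s - 3) + 1 by omega, List.getD_cons_succ]
        have : R.length - 2 = s - 3 := by omega
        rw [this] at hm2; exact hm2
      · rw [hsort, hLapp, show s - 1 = (s - 2) + 1 by omega, List.getD_cons_succ]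
        have : R.length - 1 = s - 2 := by omega
        rw [this] at hm1; exact hm1
    · -- negative r : b' - 1 = -2
      rintro r hr0 hr1
      refine JN_first ?_ (by omega)
      rw [hLapp]; omega
  · -- Case C : b' = -(s - 2)
    intro hb
    have hs4 : (4 : ℤ) ≤ (s : ℤ) := by exact_mod_cast hs
    have h3 : ∃ a k : ℕ, 0 < a ∧ a < k ∧ 2 * a ≤ k ∧ Nat.Coprime a k ∧
        (∀ i : ℕ, i < R.length - 2 → 1 - (R.mergeSort (· ≤ ·)).getD (i + 2) 0 < 1 / (k : ℚ)) ∧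
        1 - (R.mergeSort (· ≤ ·)).getD 1 0 < (a : ℚ) / (k : ℚ) ∧
        1 - (R.mergeSort (· ≤ ·)).getD 0 0 < ((k : ℚ) - (a : ℚ)) / (k : ℚ) := by
      rcases h with ⟨hB1, hB2⟩ | ⟨hb2, _⟩ | ⟨_, hthd⟩
      · rw [hlen] at hB1; omega
      · omega
      · exact hthd
    obtain ⟨a, k, ha, hak, h2a, hco, hbig, hm2, hm1⟩ := h3
    have hk0 : (0 : ℚ) < (k : ℚ) := Nat.cast_pos.2 (by omega)
    constructor
    · intro r hr0 hr1
      refine JN_first ?_ (by omega)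
      rw [hLapp]; omega
    · set M := List.maximum_of_length_pos hRpos with hM
      have hM1 : M < 1 := (hR M (List.maximum_of_length_pos_mem hRpos)).2
      refine ⟨min (1 / (k : ℚ)) (1 - M), lt_min (by positivity) (by linarith), ?_⟩
      intro r hrε hr0
      have hrk : -r < 1 / (k : ℚ) := by
        have h1 : min (1 / (k : ℚ)) (1 - M) ≤ 1 / (k : ℚ) := min_le_left _ _
        have h2 := neg_lt.mp hrε
        linarith
      have hrall : ∀ x ∈ R, x ≤ r + 1 := by
        intro x hx
        have hxM : x ≤ M := List.le_maximum_of_length_pos_of_mem hx hRpos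
        have h2 : min (1 / (k : ℚ)) (1 - M) ≤ 1 - M := min_le_right _ _
        have := neg_lt.mp hrε
        linarith
      have hsort := msort_append R (r + 1) hrall
      have hSlen : (R.mergeSort (· ≤ ·)).length = s - 1 := by rw [msort_len, hlen]
      refine JN_third ?_ ha hak h2a hco ?_ ?_ ?_
      · rw [hLapp]; omega
      · intro i hi
        rw [hLapp] at hi
        rw [hsort]
        rcases lt_or_ge i (s - 3) with hlt | hge
        · rw [List.getD_append _ _ _ _ (by omega)]
          exact hbig i (by omega)
        · have hieq : i = s - 3 := by omega
          rw [List.getD_append_right _ _ _ _ (by omega)]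
          rw [show i + 2 - (R.mergeSort (· ≤ ·)).length = 0 by omega, List.getD_cons_zero]
          linarith
      · rw [hsort, List.getD_append _ _ _ _ (by omega)]; exact hm2
      · rw [hsort, List.getD_append _ _ _ _ (by omega)]; exact hm1
end

section
/- Let s ≥ 4 and b′ be integers, let r_1, …, r_{s−1} be rationals with 0 < r_i < 1 for all i, and let ρ be a rational with 0 < ρ < 1. Assume JN(b′, (r_1, …, r_{s−1}, ρ)) holds (so in particular −(s−1) ≤ b′ ≤ −1). Then: (1) if −(s−2) ≤ b′ ≤ −2, then JN(b′, (r_1, …, r_{s−1}, r)) holds for every rational 0 < r < 1; (2) if b′ = −1, then there is a rational ε > 0 such that JN(b′, (r_1, …, r_{s−1}, r)) holds for every rational r with 0 < r < ρ + ε and r < 1; (3) if b′ = −(s−1), then there is a rational ε > 0 such that JN(b′, (r_1, …, r_{s−1}, r)) holds for every rational r with ρ − ε < r < 1. (This is Lemma 5.6 (rc_noninteger) of the paper, with part (3) stated, as its proof shows, with the conclusion that the space is NOT an L-space.) -/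
lemma getD_lt_iff {S : List ℚ} (hS : S.Pairwise (· ≤ ·)) {c : ℚ} {i : ℕ} (hi : i < S.length) :
    S.getD i 0 < c ↔ i < (S.filter (fun x => x < c)).length := by
  induction S generalizing i with
  | nil => simp at hi
  | cons a S ih =>
    rw [List.pairwise_cons] at hS
    obtain ⟨ha, hS⟩ := hS
    cases i with
    | zero =>
      simp only [List.getD_cons_zero]
      constructor
      · intro h
        rw [List.filter_cons_of_pos (by simpa using h)]
        simp
      · intro h
        have : ∃ x ∈ a :: S, x < c := by
          obtain ⟨x, hx⟩ := List.exists_mem_of_length_pos h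
          have := List.mem_filter.mp hx
          exact ⟨x, this.1, by simpa using this.2⟩
        obtain ⟨x, hx, hxc⟩ := this
        rcases List.mem_cons.mp hx with rfl | hx
        · exact hxc
        · exact lt_of_le_of_lt (ha x hx) hxc
    | succ i =>
      simp only [List.getD_cons_succ]
      have hi' : i < S.length := by simpa using hi
      constructor
      · intro h
        have h1 : i < (S.filter (fun x => x < c)).length := (ih hS hi').mp h
        have hmem : S.getD i 0 ∈ S := by
          rw [List.getD_eq_getElem _ _ hi']
          exact List.getElem_mem _
        have hac : a < c := lt_of_le_of_lt (ha _ hmem) h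
        rw [List.filter_cons_of_pos (by simpa using hac)]
        simpa using h1
      · intro h
        apply (ih hS hi').mpr
        rcases lt_or_ge a c with hac | hac
        · rw [List.filter_cons_of_pos (by simpa using hac)] at h
          simpa using h
        · rw [List.filter_cons_of_neg (by simpa using hac)] at h
          omega

lemma lt_getD_iff {S : List ℚ} (hS : S.Pairwise (· ≤ ·)) {c : ℚ} {i : ℕ} (hi : i < S.length) :
    c < S.getD i 0 ↔ S.length - i ≤ (S.filter (fun x => c < x)).length := by
  induction S generalizing i with
  | nil => simp at hi
  | cons a S ih =>
    rw [List.pairwise_cons] at hS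
    obtain ⟨ha, hS⟩ := hS
    cases i with
    | zero =>
      simp only [List.getD_cons_zero, Nat.sub_zero]
      constructor
      · intro h
        have : (a :: S).filter (fun x => c < x) = a :: S := by
          rw [List.filter_eq_self]
          intro x hx
          rcases List.mem_cons.mp hx with rfl | hx
          · simpa using h
          · simpa using lt_of_lt_of_le h (ha x hx)
        rw [this]
      · intro h
        have hle : ((a :: S).filter (fun x => c < x)).length ≤ (a :: S).length :=
          List.length_filter_le _ _
        have := List.length_filter_eq_length_iff.mp (le_antisymm hle h) a (by simp)
        simpa using this
    | succ i =>
      simp only [List.getD_cons_succ]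
      have hi' : i < S.length := by simpa using hi
      constructor
      · intro h
        have h1 := (ih hS hi').mp h
        have : (S.filter (fun x => c < x)).length ≤ ((a :: S).filter (fun x => c < x)).length := by
          rw [List.filter_cons]
          split <;> simp
        simp only [List.length_cons]
        omega
      · intro h
        apply (ih hS hi').mpr
        rcases lt_or_ge c a with hac | hac
        · have : S.filter (fun x => c < x) = S := by
            rw [List.filter_eq_self]
            intro x hx
            simpa using lt_of_lt_of_le hac (ha x hx)
          rw [this]
          omega
        · rw [List.filter_cons_of_neg (by simpa using hac)] at h
          simp only [List.length_cons] at h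
          omega

lemma cond_lt_iff (L : List ℚ) (c : ℚ) {j : ℕ} (hj : j < L.length) :
    (L.mergeSort (· ≤ ·)).getD j 0 < c ↔ j < (L.filter (fun x => x < c)).length := by
  rw [getD_lt_iff (List.pairwise_mergeSort' (· ≤ ·) L) (by rwa [List.length_mergeSort]),
    ((List.mergeSort_perm L _).filter _).length_eq]

lemma cond_gt_iff (L : List ℚ) (c : ℚ) {j : ℕ} (hj : j < L.length) :
    c < (L.mergeSort (· ≤ ·)).getD j 0 ↔
      L.length - j ≤ (L.filter (fun x => c < x)).length := by
  rw [lt_getD_iff (List.pairwise_mergeSort' (· ≤ ·) L) (by rwa [List.length_mergeSort]),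
    ((List.mergeSort_perm L _).filter _).length_eq, List.length_mergeSort]

lemma cnt_append (L : List ℚ) (x : ℚ) (p : ℚ → Prop) [DecidablePred p] :
    ((L ++ [x]).filter (fun y => p y)).length
      = (L.filter (fun y => p y)).length + if p x then 1 else 0 := by
  rw [List.filter_append, List.length_append, List.filter_singleton]
  split <;> simp_all



/-- Lemma 5.6 (rc_noninteger) of the paper, stated via the arithmetic criterion `JN`:
if `S²(b′; r_1, …, r_{s−1}, ρ)` is not an L-space (with `0 < ρ < 1`, entries of
`R = (r_1, …, r_{s−1})` in `(0,1)`, and `s ≥ 4`), then `S²(b′; r_1, …, r_{s−1}, r)`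
is not an L-space for the stated ranges of `r` (part (3) stated, as the paper's
proof shows, with the conclusion that the space is NOT an L-space). -/
theorem rc_noninteger (s : ℕ) (hs : 4 ≤ s) (b' : ℤ) (R : List ℚ)
    (hlen : R.length = s - 1) (hR : ∀ r ∈ R, 0 < r ∧ r < 1)
    (ρ : ℚ) (hρ0 : 0 < ρ) (hρ1 : ρ < 1)
    (h : JN b' (R ++ [ρ])) :
    ((-((s : ℤ) - 2) ≤ b' ∧ b' ≤ -2) →
      ∀ r : ℚ, 0 < r → r < 1 → JN b' (R ++ [r])) ∧
    (b' = -1 →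
      ∃ ε : ℚ, 0 < ε ∧ ∀ r : ℚ, 0 < r → r < ρ + ε → r < 1 → JN b' (R ++ [r])) ∧
    (b' = -((s : ℤ) - 1) →
      ∃ ε : ℚ, 0 < ε ∧ ∀ r : ℚ, ρ - ε < r → r < 1 → JN b' (R ++ [r])) := by
  have hlen2 : ∀ x : ℚ, (R ++ [x]).length = s := by
    intro x; simp only [List.length_append, List.length_singleton, hlen]; omega
  have hRlen : R.length = s - 1 := hlen
  simp only [JN] at h ⊢
  rw [hlen2 ρ] at h
  refine ⟨?_, ?_, ?_⟩
  · -- part 1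
    intro hb r _ _
    rw [hlen2 r]
    exact Or.inl hb
  · -- part 2
    intro hb
    subst hb
    rcases h with ⟨h1, h2⟩ | ⟨-, a, k, ha, hak, h2a, hco, hA, hB, hC⟩ | ⟨h3, -⟩
    · exact absurd h2 (by norm_num)
    swap
    · exfalso; omega
    -- main case
    have hk0 : (0 : ℚ) < (k : ℚ) := by
      have : 0 < k := lt_trans ha hak
      exact_mod_cast this
    set t1 : ℚ := 1 / (k : ℚ) with ht1
    set t2 : ℚ := (a : ℚ) / (k : ℚ) with ht2
    set t3 : ℚ := ((k : ℚ) - (a : ℚ)) / (k : ℚ) with ht3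
    have c1 : s - 2 ≤ ((R ++ [ρ]).filter (fun x => x < t1)).length := by
      have h0 := (cond_lt_iff (R ++ [ρ]) t1 (j := s - 3)
        (by rw [hlen2]; omega)).mp (hA (s - 3) (by omega))
      omega
    have c2 : s - 1 ≤ ((R ++ [ρ]).filter (fun x => x < t2)).length := by
      have h0 := (cond_lt_iff (R ++ [ρ]) t2 (j := s - 2)
        (by rw [hlen2]; omega)).mp hB
      omega
    have c3 : s ≤ ((R ++ [ρ]).filter (fun x => x < t3)).length := by
      have h0 := (cond_lt_iff (R ++ [ρ]) t3 (j := s - 1)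
        (by rw [hlen2]; omega)).mp hC
      omega
    have hρt3 : ρ < t3 := by
      by_contra hcon
      have he := cnt_append R ρ (fun y => y < t3)
      rw [if_neg hcon] at he
      have hle : ((R.filter (fun y => y < t3)).length) ≤ R.length :=
        List.length_filter_le _ _
      omega
    refine ⟨min (min (if ρ < t1 then t1 - ρ else 1) (if ρ < t2 then t2 - ρ else 1)) (t3 - ρ),
      ?_, ?_⟩
    · refine lt_min (lt_min ?_ ?_) (by linarith)
      · split_ifs with h1
        · linarith
        · norm_num
      · split_ifs with h1
        · linarith
        · norm_num
    · intro r hr0 hrε hr1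
      rw [hlen2 r]
      have hkey1 : ρ < t1 → r < t1 := by
        intro hx
        have h1 : min (min (if ρ < t1 then t1 - ρ else 1) (if ρ < t2 then t2 - ρ else 1))
            (t3 - ρ) ≤ if ρ < t1 then t1 - ρ else 1 := (min_le_left _ _).trans (min_le_left _ _)
        have h2 : (if ρ < t1 then t1 - ρ else 1) = t1 - ρ := if_pos hx
        linarith
      have hkey2 : ρ < t2 → r < t2 := by
        intro hx
        have h1 : min (min (if ρ < t1 then t1 - ρ else 1) (if ρ < t2 then t2 - ρ else 1))
            (t3 - ρ) ≤ if ρ < t2 then t2 - ρ else 1 := (min_le_left _ _).trans (min_le_right _ _)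
        have h2 : (if ρ < t2 then t2 - ρ else 1) = t2 - ρ := if_pos hx
        linarith
      have hkey3 : r < t3 := by
        have h1 := min_le_right (min (if ρ < t1 then t1 - ρ else 1)
          (if ρ < t2 then t2 - ρ else 1)) (t3 - ρ)
        linarith
      have mono : ∀ t : ℚ, (ρ < t → r < t) →
          ((R ++ [ρ]).filter (fun x => x < t)).length
            ≤ ((R ++ [r]).filter (fun x => x < t)).length := by
        intro t hkey
        rw [cnt_append R ρ (fun y => y < t), cnt_append R r (fun y => y < t)]
        by_cases hρt : ρ < t
        · rw [if_pos hρt, if_pos (hkey hρt)]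
        · rw [if_neg hρt]
          split_ifs <;> omega
      refine Or.inr (Or.inl ⟨rfl, a, k, ha, hak, h2a, hco, ?_, ?_, ?_⟩)
      · intro i hi
        rw [cond_lt_iff (R ++ [r]) t1 (by rw [hlen2]; omega)]
        have := mono t1 hkey1
        omega
      · rw [cond_lt_iff (R ++ [r]) t2 (by rw [hlen2]; omega)]
        have := mono t2 hkey2
        omega
      · rw [cond_lt_iff (R ++ [r]) t3 (by rw [hlen2]; omega)]
        have := mono t3 (fun _ => hkey3)
        omega
  · -- part 3
    intro hb
    rcases h with ⟨h1, h2⟩ | ⟨h3, -⟩ | ⟨-, a, k, ha, hak, h2a, hco, hA, hB, hC⟩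
    · exfalso; omega
    · exfalso; omega
    have hk0 : (0 : ℚ) < (k : ℚ) := by
      have : 0 < k := lt_trans ha hak
      exact_mod_cast this
    set u1 : ℚ := 1 - 1 / (k : ℚ) with hu1
    set u2 : ℚ := 1 - (a : ℚ) / (k : ℚ) with hu2
    set u3 : ℚ := 1 - ((k : ℚ) - (a : ℚ)) / (k : ℚ) with hu3
    have hA0 := hA 0 (by omega)
    rw [sub_lt_comm] at hA0 hB hC
    have c1 : s - 2 ≤ ((R ++ [ρ]).filter (fun x => u1 < x)).length := by
      have h0 := (cond_gt_iff (R ++ [ρ]) u1 (j := 2) (by rw [hlen2]; omega)).mp hA0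
      rw [hlen2] at h0
      omega
    have c2 : s - 1 ≤ ((R ++ [ρ]).filter (fun x => u2 < x)).length := by
      have h0 := (cond_gt_iff (R ++ [ρ]) u2 (j := 1) (by rw [hlen2]; omega)).mp hB
      rw [hlen2] at h0
      omega
    have c3 : s ≤ ((R ++ [ρ]).filter (fun x => u3 < x)).length := by
      have h0 := (cond_gt_iff (R ++ [ρ]) u3 (j := 0) (by rw [hlen2]; omega)).mp hC
      rw [hlen2] at h0
      omega
    have hρu3 : u3 < ρ := by
      by_contra hcon
      have he := cnt_append R ρ (fun y => u3 < y)
      rw [if_neg hcon] at he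
      have hle : ((R.filter (fun y => u3 < y)).length) ≤ R.length :=
        List.length_filter_le _ _
      omega
    refine ⟨min (min (if u1 < ρ then ρ - u1 else 1) (if u2 < ρ then ρ - u2 else 1)) (ρ - u3),
      ?_, ?_⟩
    · refine lt_min (lt_min ?_ ?_) (by linarith)
      · split_ifs with h1
        · linarith
        · norm_num
      · split_ifs with h1
        · linarith
        · norm_num
    · intro r hrε hr1
      rw [hlen2 r]
      have hkey1 : u1 < ρ → u1 < r := by
        intro hx
        have h1 : min (min (if u1 < ρ then ρ - u1 else 1) (if u2 < ρ then ρ - u2 else 1))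
            (ρ - u3) ≤ if u1 < ρ then ρ - u1 else 1 := (min_le_left _ _).trans (min_le_left _ _)
        have h2 : (if u1 < ρ then ρ - u1 else 1) = ρ - u1 := if_pos hx
        linarith
      have hkey2 : u2 < ρ → u2 < r := by
        intro hx
        have h1 : min (min (if u1 < ρ then ρ - u1 else 1) (if u2 < ρ then ρ - u2 else 1))
            (ρ - u3) ≤ if u2 < ρ then ρ - u2 else 1 := (min_le_left _ _).trans (min_le_right _ _)
        have h2 : (if u2 < ρ then ρ - u2 else 1) = ρ - u2 := if_pos hx
        linarith
      have hkey3 : u3 < r := by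
        have h1 := min_le_right (min (if u1 < ρ then ρ - u1 else 1)
          (if u2 < ρ then ρ - u2 else 1)) (ρ - u3)
        linarith
      have mono : ∀ u : ℚ, (u < ρ → u < r) →
          ((R ++ [ρ]).filter (fun x => u < x)).length
            ≤ ((R ++ [r]).filter (fun x => u < x)).length := by
        intro u hkey
        rw [cnt_append R ρ (fun y => u < y), cnt_append R r (fun y => u < y)]
        by_cases hρu : u < ρ
        · rw [if_pos hρu, if_pos (hkey hρu)]
        · rw [if_neg hρu]
          split_ifs <;> omega
      refine Or.inr (Or.inr ⟨hb, a, k, ha, hak, h2a, hco, ?_, ?_, ?_⟩)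
      · intro i hi
        rw [sub_lt_comm, cond_gt_iff (R ++ [r]) u1 (by rw [hlen2]; omega), hlen2]
        have := mono u1 hkey1
        omega
      · rw [sub_lt_comm, cond_gt_iff (R ++ [r]) u2 (by rw [hlen2]; omega), hlen2]
        have := mono u2 hkey2
        omega
      · rw [sub_lt_comm, cond_gt_iff (R ++ [r]) u3 (by rw [hlen2]; omega), hlen2]
        have := mono u3 (fun _ => hkey3)
        omega
end

section
/- Let s ≥ 4 and b′ be integers and let r_1, …, r_{s−1} be rationals with 0 < r_i < 1 for all i. Assume JN(b′, (r_1, …, r_{s−1})) fails. Then: (1) if b′ ≥ 0, then JN(b′, (r_1, …, r_{s−1}, r)) fails for every rational 0 < r < 1, and if b′ ≤ −(s−1), then JN(b′−1, (r_1, …, r_{s−1}, r+1)) fails for every rational −1 < r < 0; (2) if b′ = −1, then JN(b′, (r_1, …, r_{s−1}, r)) fails for every rational 0 < r < 1. (These are parts (1) and (2) of Lemma 5.7 (rc_integer_Lspace) of the paper: if S²(b′; r_1, …, r_{s−1}) is an L-space, then S²(b′; r_1, …, r_{s−1}, r) is an L-space for the stated ranges of r.) -/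
lemma getD_le_of_sublist : ∀ {l1 l2 : List ℚ}, List.Sublist l1 l2 → l2.Pairwise (· ≤ ·) →
    l2.length ≤ l1.length + 1 → ∀ i, i + 1 < l2.length → l1.getD i 0 ≤ l2.getD (i+1) 0 := by
  intro l1 l2 hsub
  induction hsub with
  | slnil => intro _ _ i hi; simp at hi
  | @cons l1 l2 a hsub ih =>
    intro hsort hlen i hi
    have heq : l1 = l2 := hsub.eq_of_length
      (le_antisymm hsub.length_le (by simpa using hlen))
    subst heq
    simp [List.getD_cons_succ]
  | @cons_cons l1 l2 a hsub ih =>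
    intro hsort hlen i hi
    obtain ⟨ha, hsort'⟩ := List.pairwise_cons.mp hsort
    rcases i with _ | j
    · simp only [List.getD_cons_zero, List.getD_cons_succ]
      have hl2 : 0 < l2.length := by simpa using hi
      rw [List.getD_eq_getElem l2 0 hl2]
      exact ha _ (List.getElem_mem hl2)
    · simp only [List.getD_cons_succ]
      exact ih hsort' (by simpa using hlen) j (by simpa using hi)

/-- Parts (1) and (2) of Lemma 5.7 (rc_integer_Lspace) of the paper, stated via the
arithmetic criterion `JN`: if `S²(b′; r_1, …, r_{s−1})` is an L-space (i.e. `JN b′ R`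
fails, where `R = (r_1, …, r_{s−1})` has entries in `(0,1)` and `s ≥ 4`), then
`S²(b′; r_1, …, r_{s−1}, r)` is an L-space for the stated ranges of `r`, using
`S²(b′; …, r) = S²(b′−1; …, r+1)` for `−1 < r < 0`. -/
theorem rc_integer_Lspace (s : ℕ) (hs : 4 ≤ s) (b' : ℤ) (R : List ℚ)
    (hlen : R.length = s - 1) (hR : ∀ r ∈ R, 0 < r ∧ r < 1)
    (h : ¬ JN b' R) :
    ((0 ≤ b' → ∀ r : ℚ, 0 < r → r < 1 → ¬ JN b' (R ++ [r])) ∧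
     (b' ≤ -((s : ℤ) - 1) → ∀ r : ℚ, -1 < r → r < 0 → ¬ JN (b' - 1) (R ++ [r + 1]))) ∧
    (b' = -1 → ∀ r : ℚ, 0 < r → r < 1 → ¬ JN b' (R ++ [r])) := by
  have hn : R.length = s - 1 := hlen
  have hn3 : 3 ≤ R.length := by omega
  refine ⟨⟨?_, ?_⟩, ?_⟩
  · intro hb r _ _ hJN
    simp only [JN, List.length_append, List.length_cons, List.length_nil] at hJN
    rcases hJN with ⟨h1, h2⟩ | ⟨h1, -⟩ | ⟨h1, -⟩ <;> omega
  · intro hb r _ _ hJN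
    simp only [JN, List.length_append, List.length_cons, List.length_nil] at hJN
    rcases hJN with ⟨h1, h2⟩ | ⟨h1, -⟩ | ⟨h1, -⟩ <;>
      [omega; omega; (push_cast at h1 ⊢; omega)]
  · intro hb r _ _ hJN
    subst hb
    simp only [JN, List.length_append, List.length_cons, List.length_nil] at hJN
    rcases hJN with ⟨h1, h2⟩ | ⟨-, a, k, ha, hak, h2ak, hcop, hC1, hC2, hC3⟩ | ⟨h1, -⟩
    · omega
    · -- the real case
      set S' := (R ++ [r]).mergeSort (· ≤ ·) with hS'
      set S := R.mergeSort (· ≤ ·) with hS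
      have hsortS : S.Pairwise (· ≤ ·) := List.pairwise_mergeSort' _ R
      have hsortS' : S'.Pairwise (· ≤ ·) := List.pairwise_mergeSort' _ (R ++ [r])
      have hsub : List.Sublist S S' := by
        refine List.sublist_of_subperm_of_pairwise ?_ hsortS hsortS'
        exact ((R.mergeSort_perm _).subperm).trans
          (((List.sublist_append_left R [r]).subperm).trans
            (((R ++ [r]).mergeSort_perm _).symm.subperm))
      have hlS : S.length = R.length := by rw [hS]; exact List.length_mergeSort R
      have hlS' : S'.length = R.length + 1 := by
        rw [hS', List.length_mergeSort]; simp
      have key : ∀ i, i + 1 < R.length + 1 → S.getD i 0 ≤ S'.getD (i+1) 0 := by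
        intro i hi
        exact getD_le_of_sublist hsub hsortS' (by omega) i (by omega)
      apply h
      simp only [JN]
      refine Or.inr (Or.inl ⟨by trivial, a, k, ha, hak, h2ak, hcop, ?_, ?_, ?_⟩)
      · intro i hi
        calc S.getD i 0 ≤ S'.getD (i+1) 0 := key i (by omega)
        _ < 1 / (k : ℚ) := hC1 (i+1) (by omega)
      · have e : R.length - 2 + 1 = R.length - 1 := by omega
        calc S.getD (R.length - 2) 0 ≤ S'.getD (R.length - 2 + 1) 0 :=
          key _ (by omega)
        _ = S'.getD (R.length - 1) 0 := by rw [e]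
        _ < (a : ℚ) / (k : ℚ) := by
          have := hC2
          have e2 : R.length + 1 - 2 = R.length - 1 := by omega
          rwa [e2] at this
      · have e : R.length - 1 + 1 = R.length := by omega
        calc S.getD (R.length - 1) 0 ≤ S'.getD (R.length - 1 + 1) 0 :=
          key _ (by omega)
        _ = S'.getD R.length 0 := by rw [e]
        _ < ((k : ℚ) - (a : ℚ)) / (k : ℚ) := by
          have := hC3
          have e2 : R.length + 1 - 1 = R.length := by omega
          rwa [e2] at this
    · push_cast at h1; omega
end

section
/- Let s ≥ 4 and b′ be integers, let r_1, …, r_{s−1} be rationals with 0 < r_i < 1 for all i, and let ρ be a rational with 0 < ρ < 1. Assume JN(b′, (r_1, …, r_{s−1}, ρ)) fails. Then: (1) if b′ ≤ −s or b′ ≥ 0, then JN(b′, (r_1, …, r_{s−1}, r)) fails for every rational 0 < r < 1; (2) if b′ = −1, then JN(b′, (r_1, …, r_{s−1}, r)) fails for every rational ρ < r < 1; (3) if b′ = −(s−1), then JN(b′, (r_1, …, r_{s−1}, r)) fails for every rational 0 < r < ρ. (This is Lemma 5.8 (rc_noninteger_Lspace) of the paper: if S²(b′; r_1, …, r_{s−1},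 ρ) is an L-space, then S²(b′; r_1, …, r_{s−1}, r) is an L-space for the stated ranges of r.) -/
private lemma ins_aux (y : ℚ) : ∀ (t : List ℚ), t.Pairwise (· ≤ ·) →
    ∀ h : ℚ, h ≤ y → (∀ z ∈ t, h ≤ z) →
    ∀ j, (h :: t).getD j 0 ≤ (List.orderedInsert (· ≤ ·) y t).getD j 0 := by
  intro t
  induction t with
  | nil =>
    intro _ h hhy _ j
    cases j with
    | zero => simpa [List.orderedInsert] using hhy
    | succ j => simp [List.orderedInsert]
  | cons a t ih =>
    intro hsort h hhy hall j
    rw [List.orderedInsert]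
    split_ifs with hya
    · cases j with
      | zero => simpa using hhy
      | succ j => simp
    · cases j with
      | zero => simpa using hall a (by simp)
      | succ j =>
        simp only [List.getD_cons_succ]
        exact ih hsort.of_cons a (le_of_not_ge hya)
          (fun z hz => (List.pairwise_cons.mp hsort).1 z hz) j

private lemma ins_mono {x y : ℚ} (hxy : x ≤ y) :
    ∀ (S : List ℚ), S.Pairwise (· ≤ ·) →
    ∀ i, (List.orderedInsert (· ≤ ·) x S).getD i 0 ≤
      (List.orderedInsert (· ≤ ·) y S).getD i 0 := by
  intro S
  induction S with
  | nil =>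
    intro _ i
    cases i with
    | zero => simpa [List.orderedInsert] using hxy
    | succ i => simp [List.orderedInsert]
  | cons h t ih =>
    intro hsort i
    rw [List.orderedInsert, List.orderedInsert]
    by_cases hxh : x ≤ h
    · rw [if_pos hxh]
      by_cases hyh : y ≤ h
      · rw [if_pos hyh]
        cases i with
        | zero => simpa using hxy
        | succ i => simp
      · rw [if_neg hyh]
        cases i with
        | zero => simpa using hxh
        | succ i =>
          simp only [List.getD_cons_succ]
          exact ins_aux y t hsort.of_cons h (le_of_not_ge hyh)
            (fun z hz => (List.pairwise_cons.mp hsort).1 z hz) i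
    · have hyh : ¬ y ≤ h := fun hy => hxh (hxy.trans hy)
      rw [if_neg hxh, if_neg hyh]
      cases i with
      | zero => simp
      | succ i =>
        simp only [List.getD_cons_succ]
        exact ih hsort.of_cons i

private lemma sort_append (R : List ℚ) (x : ℚ) :
    (R ++ [x]).mergeSort (· ≤ ·) = List.orderedInsert (· ≤ ·) x (R.mergeSort (· ≤ ·)) := by
  refine List.Perm.eq_of_pairwise' (List.pairwise_mergeSort' _ _)
    (List.Pairwise.orderedInsert x _ (List.pairwise_mergeSort' _ R)) ?_
  exact (List.mergeSort_perm (R ++ [x]) _).trans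
    ((List.perm_append_singleton x R).trans
      (((List.mergeSort_perm R _).symm.cons x).trans
        (List.perm_orderedInsert _ x _).symm))

private lemma sortedGetD_mono (R : List ℚ) {x y : ℚ} (hxy : x ≤ y) (i : ℕ) :
    ((R ++ [x]).mergeSort (· ≤ ·)).getD i 0 ≤ ((R ++ [y]).mergeSort (· ≤ ·)).getD i 0 := by
  rw [sort_append, sort_append]
  exact ins_mono hxy _ (List.pairwise_mergeSort' _ R) i

/-- Lemma 5.8 (rc_noninteger_Lspace) of the paper, stated via the arithmetic criterion
`JN`: if `S²(b′; r_1, …, r_{s−1}, ρ)` is an L-space (i.e. `JN b′ (R ++ [ρ])` fails,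
with `0 < ρ < 1`, entries of `R = (r_1, …, r_{s−1})` in `(0,1)`, and `s ≥ 4`), then
`S²(b′; r_1, …, r_{s−1}, r)` is an L-space for the stated ranges of `r`. -/
theorem rc_noninteger_Lspace (s : ℕ) (hs : 4 ≤ s) (b' : ℤ) (R : List ℚ)
    (hlen : R.length = s - 1) (hR : ∀ r ∈ R, 0 < r ∧ r < 1)
    (ρ : ℚ) (hρ0 : 0 < ρ) (hρ1 : ρ < 1)
    (h : ¬ JN b' (R ++ [ρ])) :
    ((b' ≤ -(s : ℤ) ∨ 0 ≤ b') → ∀ r : ℚ, 0 < r → r < 1 → ¬ JN b' (R ++ [r])) ∧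
    (b' = -1 → ∀ r : ℚ, ρ < r → r < 1 → ¬ JN b' (R ++ [r])) ∧
    (b' = -((s : ℤ) - 1) → ∀ r : ℚ, 0 < r → r < ρ → ¬ JN b' (R ++ [r])) := by
  simp only [JN, List.length_append, List.length_singleton, hlen] at h ⊢
  refine ⟨?_, ?_, ?_⟩
  · intro hb r _ _ hJN
    rcases hJN with h1 | h2 | h3
    · omega
    · exact absurd h2.1 (by omega)
    · exact absurd h3.1 (by omega)
  · intro hb1 r hρr _ hJN
    rcases hJN with h1 | h2 | h3
    · omega
    · obtain ⟨-, a, k, ha, hak, h2a, hcop, hsmall, hs2, hs1⟩ := h2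
      exact h (Or.inr (Or.inl ⟨by omega, a, k, ha, hak, h2a, hcop,
        fun i hi => lt_of_le_of_lt (sortedGetD_mono R hρr.le i) (hsmall i hi),
        lt_of_le_of_lt (sortedGetD_mono R hρr.le _) hs2,
        lt_of_le_of_lt (sortedGetD_mono R hρr.le _) hs1⟩))
    · exact absurd h3.1 (by rw [hb1]; omega)
  · intro hb1 r _ hrρ hJN
    rcases hJN with h1 | h2 | h3
    · rw [hb1] at h1; omega
    · exact absurd h2.1 (by rw [hb1]; omega)
    · obtain ⟨-, a, k, ha, hak, h2a, hcop, hsmall, hs2, hs1⟩ := h3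
      exact h (Or.inr (Or.inr ⟨by omega, a, k, ha, hak, h2a, hcop,
        fun i hi => lt_of_le_of_lt
          (by linarith [sortedGetD_mono R hrρ.le (i + 2)]) (hsmall i hi),
        lt_of_le_of_lt (by linarith [sortedGetD_mono R hrρ.le 1]) hs2,
        lt_of_le_of_lt (by linarith [sortedGetD_mono R hrρ.le 0]) hs1⟩))
end

section
/- Let s ≥ 4 and b be integers, let r_1, …, r_{s−1} be rationals with 0 < r_i < 1 for all i, and let t, u, v, w be integers with t·w − u·v = 1 and 0 ≤ w < v. For a rational q, say L(q) holds if either q ∈ ℤ and JN(b + q, (r_1, …, r_{s−1})) fails, or q ∉ ℤ and JN(b + ⌊q⌋, (r_1, …, r_{s−1}, q − ⌊q⌋)) fails (so L(q) encodes that the Seifert fibered space Y = S²(b; r_1, …, r_{s−1}, q) is an L-space). Then the set of integers n with n·t + v ≠ 0 and L((n·u + w)/(n·t + v)) is infinite if and only if either t = 0 or L(u/t) holds. (This is Proposition 5.2 of the paper expressed arithmetically: the family Y_n = S²(b; r_1, …, r_{s−1}, (nu+w)/(nt+v)) contains infinitely many L-spaces if and only if the limit Y_∞ = S²(b; r_1,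 …, r_{s−1}, u/t) is an L-space, where for t = 0 the limit is a connected sum of lens spaces and hence an L-space.) -/
/-- `IsLspaceParam b R q` encodes that the Seifert fibered space
`Y = S²(b; r_1, …, r_{s−1}, q)` (where `R = (r_1, …, r_{s−1})`) is an L-space:
either `q` is an integer and `JN (b + q) R` fails, or `q` is not an integer and
`JN (b + ⌊q⌋) (R ++ [q − ⌊q⌋])` fails. -/
def IsLspaceParam (b : ℤ) (R : List ℚ) (q : ℚ) : Prop :=
  ((∃ z : ℤ, q = (z : ℚ)) ∧ ¬ JN (b + ⌊q⌋) R) ∨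
  ((¬ ∃ z : ℤ, q = (z : ℚ)) ∧ ¬ JN (b + ⌊q⌋) (R ++ [q - ⌊q⌋]))


open List


local notation "ins" => List.orderedInsert (α := ℚ) (· ≤ ·)

lemma ins_getD_zero_le (y : ℚ) (S : List ℚ) : (ins y S).getD 0 0 ≤ y := by
  cases S with
  | nil => simp [List.orderedInsert]
  | cons d S' =>
    by_cases h : y ≤ d
    · simp [List.orderedInsert, h]
    · simp only [List.orderedInsert, if_neg h]
      exact le_of_not_ge h

lemma le_ins_getD_zero {c y : ℚ} {S : List ℚ} (hcy : c ≤ y) (hS : ∀ e ∈ S, c ≤ e) :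
    c ≤ (ins y S).getD 0 0 := by
  cases S with
  | nil => simpa [List.orderedInsert]
  | cons d S' =>
    by_cases h : y ≤ d
    · simpa [List.orderedInsert, h]
    · simp only [List.orderedInsert, if_neg h]
      exact hS d (by simp)

lemma getD_le_ins_getD_succ {S : List ℚ} (hS : S.Pairwise (· ≤ ·)) (y : ℚ) (j : ℕ) :
    S.getD j 0 ≤ (ins y S).getD (j+1) 0 := by
  induction S generalizing j with
  | nil => simp [List.orderedInsert, List.getD]
  | cons c S' ih =>
    by_cases h : y ≤ c
    · simp [List.orderedInsert, h, List.getD]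
    · simp only [List.orderedInsert, if_neg h]
      cases j with
      | zero =>
        simp only [List.getD_cons_zero, List.getD_cons_succ]
        exact le_ins_getD_zero (le_of_not_ge h) (fun e he => (List.pairwise_cons.mp hS).1 e he)
      | succ j' =>
        simp only [List.getD_cons_succ]
        exact ih (List.pairwise_cons.mp hS).2 j'

lemma ins_getD_succ_le_max (y : ℚ) (S : List ℚ) (i : ℕ) :
    (ins y S).getD (i+1) 0 ≤ max (S.getD i 0) y := by
  induction S generalizing i with
  | nil =>
    simp only [List.orderedInsert]
    rw [List.getD_eq_default _ _ (by simp)]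
    simp [List.getD]
  | cons c S' ih =>
    by_cases h : y ≤ c
    · simp only [List.orderedInsert, if_pos h, List.getD_cons_succ]
      exact le_max_left _ _
    · simp only [List.orderedInsert, if_neg h]
      cases i with
      | zero =>
        simp only [List.getD_cons_succ, List.getD_cons_zero]
        exact le_max_of_le_right (ins_getD_zero_le y S')
      | succ i' =>
        simp only [List.getD_cons_succ]
        exact ih i'

lemma ins_getD_mono {x y : ℚ} {S : List ℚ} (hS : S.Pairwise (· ≤ ·)) (hxy : x ≤ y) (j : ℕ) :
    (ins x S).getD j 0 ≤ (ins y S).getD j 0 := by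
  induction S generalizing j with
  | nil =>
    cases j with
    | zero => simpa [List.orderedInsert]
    | succ j' => simp [List.orderedInsert, List.getD]
  | cons c S' ih =>
    by_cases hx : x ≤ c
    · by_cases hy : y ≤ c
      · simp only [List.orderedInsert, if_pos hx, if_pos hy]
        cases j with
        | zero => simpa
        | succ j' => simp
      · simp only [List.orderedInsert, if_pos hx, if_neg hy]
        cases j with
        | zero => simpa using hx
        | succ j' =>
          simp only [List.getD_cons_succ]
          cases j' with
          | zero =>
            exact le_ins_getD_zero (le_of_not_ge hy) (fun e he => (List.pairwise_cons.mp hS).1 e he)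
          | succ j'' =>
            simp only [List.getD_cons_succ]
            exact getD_le_ins_getD_succ (List.pairwise_cons.mp hS).2 y j''
    · have hy : ¬ y ≤ c := fun h => hx (hxy.trans h)
      simp only [List.orderedInsert, if_neg hx, if_neg hy]
      cases j with
      | zero => simp
      | succ j' =>
        simp only [List.getD_cons_succ]
        exact ih (List.pairwise_cons.mp hS).2 j'

lemma ins_getD_lip {x y : ℚ} {S : List ℚ} (hS : S.Pairwise (· ≤ ·)) (hxy : x ≤ y) (j : ℕ) :
    (ins y S).getD j 0 ≤ (ins x S).getD j 0 + (y - x) := by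
  induction S generalizing j with
  | nil =>
    cases j with
    | zero => simp [List.orderedInsert]
    | succ j' => simp [List.orderedInsert, List.getD]; linarith
  | cons c S' ih =>
    by_cases hy : y ≤ c
    · have hx : x ≤ c := hxy.trans hy
      simp only [List.orderedInsert, if_pos hx, if_pos hy]
      cases j with
      | zero => simp only [List.getD_cons_zero]; linarith
      | succ j' => simp only [List.getD_cons_succ]; linarith
    · by_cases hx : x ≤ c
      · -- ins y (c::S') = c :: ins y S',  ins x (c::S') = x :: c :: S'
        simp only [List.orderedInsert, if_neg hy, if_pos hx]
        cases j with
        | zero =>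
          simp only [List.getD_cons_zero]
          have := le_of_not_ge hy
          linarith
        | succ j' =>
          simp only [List.getD_cons_succ]
          cases j' with
          | zero =>
            simp only [List.getD_cons_zero]
            have := ins_getD_zero_le y S'
            linarith
          | succ i' =>
            simp only [List.getD_cons_succ]
            by_cases hi : i' < S'.length
            · have h1 := ins_getD_succ_le_max y S' i'
              have h2 : x ≤ S'.getD i' 0 := by
                have hmem : S'.getD i' 0 ∈ S' := by
                  rw [List.getD_eq_getElem S' 0 hi]; exact List.getElem_mem hi
                exact hx.trans ((List.pairwise_cons.mp hS).1 _ hmem)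
              rcases max_cases (S'.getD i' 0) y with ⟨he, _⟩ | ⟨he, _⟩ <;> rw [he] at h1 <;> linarith
            · push_neg at hi
              rw [List.getD_eq_default _ _ (by simp [List.orderedInsert_length]; omega)]
              have : (0:ℚ) ≤ S'.getD i' 0 + (y - x) := by
                rw [List.getD_eq_default _ _ hi]; linarith
              linarith
      · have := le_of_not_ge hx
        simp only [List.orderedInsert, if_neg hy, if_neg hx]
        cases j with
        | zero => simp only [List.getD_cons_zero]; linarith
        | succ j' =>
          simp only [List.getD_cons_succ]
          exact ih (List.pairwise_cons.mp hS).2 j'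


def JNbase (a k : ℕ) : Prop := 0 < a ∧ a < k ∧ 2 * a ≤ k ∧ Nat.Coprime a k

def JNC2 (S : List ℚ) (l : ℕ) (a k : ℕ) : Prop :=
  (∀ i : ℕ, i < l - 2 → S.getD i 0 < 1 / (k : ℚ)) ∧
    S.getD (l - 2) 0 < (a : ℚ) / (k : ℚ) ∧
    S.getD (l - 1) 0 < ((k : ℚ) - (a : ℚ)) / (k : ℚ)

def JNC3 (S : List ℚ) (l : ℕ) (a k : ℕ) : Prop :=
  (∀ i : ℕ, i < l - 2 → 1 - S.getD (i + 2) 0 < 1 / (k : ℚ)) ∧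
    1 - S.getD 1 0 < (a : ℚ) / (k : ℚ) ∧
    1 - S.getD 0 0 < ((k : ℚ) - (a : ℚ)) / (k : ℚ)


lemma JN_def (b : ℤ) (T : List ℚ) : JN b T ↔
    ((-((T.length : ℤ) - 2) ≤ b ∧ b ≤ -2) ∨
    (b = -1 ∧ ∃ a k : ℕ, JNbase a k ∧ JNC2 (T.mergeSort (· ≤ ·)) T.length a k) ∨
    (b = -((T.length : ℤ) - 1) ∧ ∃ a k : ℕ, JNbase a k ∧ JNC3 (T.mergeSort (· ≤ ·)) T.length a k)) := by
  simp only [JN, JNbase, JNC2, JNC3, and_assoc]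

lemma JNbase.kpos {a k : ℕ} (h : JNbase a k) : (0:ℚ) < k := by
  have : 0 < k := Nat.lt_trans h.1 h.2.1
  exact_mod_cast this

lemma JNbase.one_le_a {a k : ℕ} (h : JNbase a k) : (1:ℚ)/k ≤ (a:ℚ)/k := by
  have hk := h.kpos
  have : (1:ℚ) ≤ a := by exact_mod_cast h.1
  gcongr

lemma JNbase.a_le_ka {a k : ℕ} (h : JNbase a k) : (a:ℚ)/k ≤ ((k:ℚ)-a)/k := by
  have hk := h.kpos
  have : 2*(a:ℚ) ≤ k := by exact_mod_cast h.2.2.1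
  gcongr
  linarith

lemma JNC2_shift {S : List ℚ} {x : ℚ} {a k : ℕ} (hl : 3 ≤ S.length) :
    JNC2 (x :: S) (S.length + 1) a k ↔ x < 1/(k:ℚ) ∧ JNC2 S S.length a k := by
  set l := S.length with hldef
  have h1 : l + 1 - 2 = (l - 2) + 1 := by omega
  have h2 : l + 1 - 1 = (l - 1) + 1 := by omega
  have h3 : l - 1 = (l - 2) + 1 := by omega
  constructor
  · rintro ⟨hall, hp, hq⟩
    refine ⟨hall 0 (by omega), ⟨fun i hi => ?_, ?_, ?_⟩⟩
    · have := hall (i+1) (by omega)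
      simpa using this
    · have := hp; rw [h1, List.getD_cons_succ] at this; exact this
    · simpa [h2] using hq
  · rintro ⟨hx, hall, hp, hq⟩
    refine ⟨fun i hi => ?_, ?_, ?_⟩
    · cases i with
      | zero => simpa using hx
      | succ j => simp only [List.getD_cons_succ]; exact hall j (by omega)
    · rw [h1, List.getD_cons_succ]; exact hp
    · rw [h2, List.getD_cons_succ]; exact hq


lemma sorted_getD_mono {T : List ℚ} (hT : T.Pairwise (· ≤ ·)) {i j : ℕ} (hij : i ≤ j)
    (hj : j < T.length) : T.getD i 0 ≤ T.getD j 0 := by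
  rw [List.getD_eq_getElem T 0 (lt_of_le_of_lt hij hj), List.getD_eq_getElem T 0 hj]
  exact hT.rel_get_of_le (a := ⟨i, lt_of_le_of_lt hij hj⟩) (b := ⟨j, hj⟩) hij

lemma getD_zero_le_of_mem {S : List ℚ} (hS : S.Pairwise (· ≤ ·)) {e : ℚ} (he : e ∈ S) :
    S.getD 0 0 ≤ e := by
  obtain ⟨i, rfl⟩ := List.mem_iff_get.mp he
  have h0 : (0:ℕ) < S.length := Nat.lt_of_le_of_lt (Nat.zero_le _) i.2
  rw [List.getD_eq_getElem S 0 h0]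
  exact hS.rel_get_of_le (a := ⟨0, h0⟩) (b := i) (Nat.zero_le _)

lemma le_getD_last_of_mem {S : List ℚ} (hS : S.Pairwise (· ≤ ·)) {e : ℚ} (he : e ∈ S) :
    e ≤ S.getD (S.length - 1) 0 := by
  obtain ⟨i, rfl⟩ := List.mem_iff_get.mp he
  have h1 : S.length - 1 < S.length := Nat.sub_lt (Nat.lt_of_le_of_lt (Nat.zero_le _) i.2) one_pos
  rw [List.getD_eq_getElem S 0 h1]
  have hle : (i : ℕ) ≤ S.length - 1 := by have := i.2; omega
  exact hS.rel_get_of_le (a := i) (b := ⟨S.length - 1, h1⟩) hle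

lemma mergeSort_append_eq (R : List ℚ) (x : ℚ) :
    (R ++ [x]).mergeSort (· ≤ ·) = ins x (R.mergeSort (· ≤ ·)) := by
  refine List.Perm.eq_of_pairwise' (List.pairwise_mergeSort' (· ≤ ·) _) ((List.pairwise_mergeSort' (· ≤ ·) R).orderedInsert x _) ?_
  calc (R ++ [x]).mergeSort (· ≤ ·) ~ R ++ [x] := List.mergeSort_perm _ _
    _ ~ x :: R := List.perm_append_singleton x R
    _ ~ x :: R.mergeSort (· ≤ ·) := ((List.mergeSort_perm R _).cons x).symm
    _ ~ ins x (R.mergeSort (· ≤ ·)) := (List.perm_orderedInsert _ x _).symm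

lemma ins_eq_cons {S : List ℚ} {x : ℚ} (hne : S ≠ []) (hx : x ≤ S.getD 0 0) :
    ins x S = x :: S := by
  cases S with
  | nil => exact absurd rfl hne
  | cons c S' =>
    simp only [List.getD_cons_zero] at hx
    simp [List.orderedInsert, hx]

lemma ins_eq_append {S : List ℚ} {x : ℚ} (hS : S.Pairwise (· ≤ ·)) (hx : ∀ e ∈ S, e ≤ x) :
    ins x S = S ++ [x] := by
  refine (fun h1 h2 => List.Perm.eq_of_pairwise' (hS.orderedInsert x S) h2 h1) ?_ ?_
  · calc ins x S ~ x :: S := List.perm_orderedInsert _ x S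
      _ ~ S ++ [x] := (List.perm_append_singleton x S).symm
  · rw [List.pairwise_append]
    exact ⟨hS, List.pairwise_singleton _ _, fun a ha b hb => by
      simp only [List.mem_singleton] at hb; subst hb; exact hx a ha⟩


lemma getD_append_lt (S : List ℚ) (x : ℚ) {i : ℕ} (h : i < S.length) :
    (S ++ [x]).getD i 0 = S.getD i 0 :=
  List.getD_append S [x] 0 i h

lemma getD_append_last (S : List ℚ) (x : ℚ) : (S ++ [x]).getD S.length 0 = x := by
  rw [List.getD_eq_getElem]
  · simp
  · simp

lemma JNC3_shift {S : List ℚ} {x : ℚ} {a k : ℕ} (hl : 3 ≤ S.length) :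
    JNC3 (S ++ [x]) (S.length + 1) a k ↔ 1 - x < 1/(k:ℚ) ∧ JNC3 S S.length a k := by
  set l := S.length with hldef
  have h1 : l + 1 - 2 = l - 1 := by omega
  constructor
  · rintro ⟨hall, hp, hq⟩
    rw [h1] at hall
    refine ⟨?_, fun i hi => ?_, ?_, ?_⟩
    · have := hall (l-2) (by omega)
      rw [show l - 2 + 2 = l from by omega, getD_append_last] at this
      exact this
    · have := hall i (by omega)
      rwa [getD_append_lt S x (by omega)] at this
    · rwa [getD_append_lt S x (by omega)] at hp
    · rwa [getD_append_lt S x (by omega)] at hq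
  · rintro ⟨hx, hall, hp, hq⟩
    refine ⟨fun i hi => ?_, ?_, ?_⟩
    · rw [h1] at hi
      rcases Nat.lt_or_ge i (l-2) with hc | hc
      · rw [getD_append_lt S x (by omega)]
        exact hall i hc
      · rw [show i + 2 = l from by omega, getD_append_last]
        exact hx
    · rwa [getD_append_lt S x (by omega)]
    · rwa [getD_append_lt S x (by omega)]

lemma JNC3_cons_false {S : List ℚ} {x : ℚ} {a k : ℕ} (hl : 3 ≤ S.length) (hb : JNbase a k)
    (hx : x ≤ 1 - S.getD (S.length - 1) 0) (h : JNC3 (x :: S) (S.length + 1) a k) : False := by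
  set l := S.length with hldef
  obtain ⟨hall, hp, hq⟩ := h
  have h1 := hall (l-2) (by omega)
  rw [show l - 2 + 2 = (l-1) + 1 from by omega, List.getD_cons_succ] at h1
  simp only [List.getD_cons_zero] at hq
  have hk0 : (k:ℚ) ≠ 0 := ne_of_gt hb.kpos
  have hka : ((k:ℚ) - a)/k = 1 - a/k := by field_simp
  have h2 := hb.one_le_a
  rw [hka] at hq
  linarith

lemma JNC2_append_false {S : List ℚ} {x : ℚ} {a k : ℕ} (hl : 3 ≤ S.length) (hb : JNbase a k)
    (hx : 1 - S.getD 0 0 ≤ x) (h : JNC2 (S ++ [x]) (S.length + 1) a k) : False := by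
  set l := S.length with hldef
  obtain ⟨hall, hp, hq⟩ := h
  have h1 := hall 0 (by omega)
  rw [getD_append_lt S x (by omega)] at h1
  rw [show l + 1 - 1 = l from by omega, getD_append_last] at hq
  have hk0 : (k:ℚ) ≠ 0 := ne_of_gt hb.kpos
  have hka : ((k:ℚ) - a)/k = 1 - a/k := by field_simp
  have h2 := hb.one_le_a
  rw [hka] at hq
  linarith

lemma JNC2_anti {S : List ℚ} {x x' : ℚ} {a k : ℕ} (hS : S.Pairwise (· ≤ ·)) (hxx : x' ≤ x)
    (h : JNC2 (ins x S) (S.length + 1) a k) : JNC2 (ins x' S) (S.length + 1) a k :=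
  ⟨fun i hi => lt_of_le_of_lt (ins_getD_mono hS hxx i) (h.1 i hi),
   lt_of_le_of_lt (ins_getD_mono hS hxx _) h.2.1,
   lt_of_le_of_lt (ins_getD_mono hS hxx _) h.2.2⟩

lemma JNC3_mono {S : List ℚ} {x x' : ℚ} {a k : ℕ} (hS : S.Pairwise (· ≤ ·)) (hxx : x ≤ x')
    (h : JNC3 (ins x S) (S.length + 1) a k) : JNC3 (ins x' S) (S.length + 1) a k :=
  ⟨fun i hi => lt_of_le_of_lt (by linarith [ins_getD_mono hS hxx (i+2)] : 1 - (ins x' S).getD (i+2) 0 ≤ 1 - (ins x S).getD (i+2) 0) (h.1 i hi),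
   lt_of_le_of_lt (by linarith [ins_getD_mono hS hxx 1]) h.2.1,
   lt_of_le_of_lt (by linarith [ins_getD_mono hS hxx 0]) h.2.2⟩

lemma JNC2_open {S : List ℚ} {x : ℚ} {a k : ℕ} (hS : S.Pairwise (· ≤ ·)) (h3 : 3 ≤ S.length)
    (h : JNC2 (ins x S) (S.length + 1) a k) :
    ∃ δ : ℚ, 0 < δ ∧ ∀ y, x ≤ y → y - x < δ → JNC2 (ins y S) (S.length + 1) a k := by
  set l := S.length with hldef
  set T := ins x S with hT
  have hTlen : T.length = l + 1 := by rw [hT, List.orderedInsert_length]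
  obtain ⟨hall, hp, hq⟩ := h
  have h1 : T.getD (l-2) 0 < 1/(k:ℚ) := hall (l-2) (by omega)
  rw [show l + 1 - 2 = l - 1 from by omega] at hp
  rw [show l + 1 - 1 = l from by omega] at hq
  refine ⟨min (1/(k:ℚ) - T.getD (l-2) 0) (min ((a:ℚ)/k - T.getD (l-1) 0) (((k:ℚ)-a)/k - T.getD l 0)),
    by simp only [lt_min_iff]; refine ⟨by linarith, by linarith, by linarith⟩, fun y hxy hyd => ?_⟩
  simp only [lt_min_iff] at hyd
  have hlip := ins_getD_lip hS hxy
  have hT'sorted : (ins y S).Pairwise (· ≤ ·) := hS.orderedInsert y S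
  have hT'len : (ins y S).length = l + 1 := List.orderedInsert_length _ _ _
  refine ⟨fun i hi => ?_, ?_, ?_⟩
  · have hm : (ins y S).getD i 0 ≤ (ins y S).getD (l-2) 0 :=
      sorted_getD_mono hT'sorted (by omega) (by omega)
    have := hlip (l-2)
    linarith [hyd.1]
  · rw [show l + 1 - 2 = l - 1 from by omega]
    have := hlip (l-1)
    linarith [hyd.2.1]
  · rw [show l + 1 - 1 = l from by omega]
    have := hlip l
    linarith [hyd.2.2]

lemma JNC3_open {S : List ℚ} {x : ℚ} {a k : ℕ} (hS : S.Pairwise (· ≤ ·)) (h3 : 3 ≤ S.length)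
    (h : JNC3 (ins x S) (S.length + 1) a k) :
    ∃ δ : ℚ, 0 < δ ∧ ∀ y, y ≤ x → x - y < δ → JNC3 (ins y S) (S.length + 1) a k := by
  set l := S.length with hldef
  set T := ins x S with hT
  have hTlen : T.length = l + 1 := by rw [hT, List.orderedInsert_length]
  obtain ⟨hall, hp, hq⟩ := h
  have h1 : 1 - T.getD 2 0 < 1/(k:ℚ) := hall 0 (by omega)
  refine ⟨min (T.getD 2 0 - (1 - 1/(k:ℚ))) (min (T.getD 1 0 - (1 - (a:ℚ)/k)) (T.getD 0 0 - (1 - ((k:ℚ)-a)/k))),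
    by simp only [lt_min_iff]; refine ⟨by linarith, by linarith, by linarith⟩, fun y hxy hyd => ?_⟩
  simp only [lt_min_iff] at hyd
  have hlip := ins_getD_lip hS hxy
  have hT'sorted : (ins y S).Pairwise (· ≤ ·) := hS.orderedInsert y S
  have hT'len : (ins y S).length = l + 1 := List.orderedInsert_length _ _ _
  refine ⟨fun i hi => ?_, ?_, ?_⟩
  · have hm : (ins y S).getD 2 0 ≤ (ins y S).getD (i+2) 0 :=
      sorted_getD_mono hT'sorted (by omega) (by omega)
    have := hlip 2
    linarith [hyd.1]
  · have := hlip 1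
    linarith [hyd.2.1]
  · have := hlip 0
    linarith [hyd.2.2]

lemma JN_append_iff (b' : ℤ) (R : List ℚ) (x : ℚ) :
    JN b' (R ++ [x]) ↔ ((-((R.length : ℤ) - 1) ≤ b' ∧ b' ≤ -2) ∨
    (b' = -1 ∧ ∃ a k : ℕ, JNbase a k ∧ JNC2 (ins x (R.mergeSort (· ≤ ·))) (R.length + 1) a k) ∨
    (b' = -(R.length : ℤ) ∧ ∃ a k : ℕ, JNbase a k ∧ JNC3 (ins x (R.mergeSort (· ≤ ·))) (R.length + 1) a k)) := by
  rw [JN_def, mergeSort_append_eq]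
  simp only [List.length_append, List.length_singleton]
  have e1 : ((R.length + 1 : ℕ) : ℤ) - 2 = (R.length : ℤ) - 1 := by push_cast; ring
  have e2 : ((R.length + 1 : ℕ) : ℤ) - 1 = (R.length : ℤ) := by push_cast; ring
  rw [e1, e2]

lemma JN_small_iff {R S : List ℚ} {x : ℚ} (hl : 3 ≤ R.length)
    (hSeq : R.mergeSort (· ≤ ·) = S)
    (hx1 : x ≤ S.getD 0 0)
    (hx2 : x ≤ 1 - S.getD (R.length - 1) 0) (b' : ℤ) :
    JN b' (R ++ [x]) ↔ ((-((R.length : ℤ) - 1) ≤ b' ∧ b' ≤ -2) ∨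
      (b' = -1 ∧ ∃ a k : ℕ, JNbase a k ∧ x < 1/(k:ℚ) ∧ JNC2 S R.length a k)) := by
  subst hSeq
  set S := R.mergeSort (· ≤ ·) with hSdef
  have hSl : S.length = R.length := by rw [hSdef]; exact List.length_mergeSort _
  have hSne : S ≠ [] := by
    intro h; rw [h] at hSl; simp at hSl; omega
  have hins : ins x S = x :: S := ins_eq_cons hSne hx1
  have hl' : 3 ≤ S.length := by omega
  rw [← hSl] at hx2
  rw [JN_append_iff, hins, ← hSl]
  constructor
  · rintro (h1 | ⟨hb, a, k, hbase, h2⟩ | ⟨hb, a, k, hbase, h3⟩)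
    · exact Or.inl h1
    · rw [JNC2_shift (by omega)] at h2
      exact Or.inr ⟨hb, a, k, hbase, h2.1, h2.2⟩
    · exact absurd h3 (fun h3 => JNC3_cons_false (by omega) hbase hx2 h3)
  · rintro (h1 | ⟨hb, a, k, hbase, hxk, h2⟩)
    · exact Or.inl h1
    · exact Or.inr (Or.inl ⟨hb, a, k, hbase, (JNC2_shift (by omega)).mpr ⟨hxk, h2⟩⟩)

lemma JN_large_iff {R S : List ℚ} {x : ℚ} (hl : 3 ≤ R.length)
    (hSeq : R.mergeSort (· ≤ ·) = S)
    (hx1 : S.getD (R.length - 1) 0 ≤ x)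
    (hx2 : 1 - S.getD 0 0 ≤ x) (b' : ℤ) :
    JN b' (R ++ [x]) ↔ ((-((R.length : ℤ) - 1) ≤ b' ∧ b' ≤ -2) ∨
      (b' = -(R.length : ℤ) ∧ ∃ a k : ℕ, JNbase a k ∧ 1 - x < 1/(k:ℚ) ∧ JNC3 S R.length a k)) := by
  subst hSeq
  set S := R.mergeSort (· ≤ ·) with hSdef
  have hSsorted : S.Pairwise (· ≤ ·) := List.pairwise_mergeSort' (· ≤ ·) R
  have hSl : S.length = R.length := by rw [hSdef]; exact List.length_mergeSort _
  rw [← hSl] at hx1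
  have hins : ins x S = S ++ [x] :=
    ins_eq_append hSsorted (fun e he => (le_getD_last_of_mem hSsorted he).trans hx1)
  have hl' : 3 ≤ S.length := by omega
  rw [JN_append_iff, hins, ← hSl]
  constructor
  · rintro (h1 | ⟨hb, a, k, hbase, h2⟩ | ⟨hb, a, k, hbase, h3⟩)
    · exact Or.inl h1
    · exact absurd h2 (fun h2 => JNC2_append_false (by omega) hbase hx2 h2)
    · rw [JNC3_shift (by omega)] at h3
      exact Or.inr ⟨hb, a, k, hbase, h3.1, h3.2⟩
  · rintro (h1 | ⟨hb, a, k, hbase, hxk, h3⟩)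
    · exact Or.inl h1
    · exact Or.inr (Or.inr ⟨hb, a, k, hbase, (JNC3_shift (by omega)).mpr ⟨hxk, h3⟩⟩)

lemma JN_stable {R : List ℚ} {x : ℚ} {b' : ℤ} (hl : 3 ≤ R.length) (h : JN b' (R ++ [x])) :
    ∃ δ : ℚ, 0 < δ ∧ ∀ y, |y - x| < δ → JN b' (R ++ [y]) := by
  set S := R.mergeSort (· ≤ ·) with hSdef
  have hSsorted : S.Pairwise (· ≤ ·) := List.pairwise_mergeSort' (· ≤ ·) R
  have hSl : S.length = R.length := by rw [hSdef]; exact List.length_mergeSort _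
  rw [JN_append_iff, ← hSl] at h
  rcases h with h1 | ⟨hb, a, k, hbase, h2⟩ | ⟨hb, a, k, hbase, h3⟩
  · exact ⟨1, one_pos, fun y _ => by
      rw [JN_append_iff, ← hSl]; exact Or.inl h1⟩
  · obtain ⟨δ, hδ, hop⟩ := JNC2_open hSsorted (by omega) h2
    refine ⟨δ, hδ, fun y hy => ?_⟩
    rw [abs_lt] at hy
    rw [JN_append_iff, ← hSl]
    refine Or.inr (Or.inl ⟨hb, a, k, hbase, ?_⟩)
    rcases le_total y x with hc | hc
    · exact JNC2_anti hSsorted hc h2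
    · exact hop y hc (by linarith [hy.2])
  · obtain ⟨δ, hδ, hop⟩ := JNC3_open hSsorted (by omega) h3
    refine ⟨δ, hδ, fun y hy => ?_⟩
    rw [abs_lt] at hy
    rw [JN_append_iff, ← hSl]
    refine Or.inr (Or.inr ⟨hb, a, k, hbase, ?_⟩)
    rcases le_total x y with hc | hc
    · exact JNC3_mono hSsorted hc h3
    · exact hop y hc (by linarith [hy.1])

lemma JN_onesided {R : List ℚ} {x : ℚ} {b' : ℤ} (hl : 3 ≤ R.length)
    (h : ¬ JN b' (R ++ [x])) :
    (∀ y, x ≤ y → ¬ JN b' (R ++ [y])) ∨ (∀ y, y ≤ x → ¬ JN b' (R ++ [y])) := by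
  set S := R.mergeSort (· ≤ ·) with hSdef
  have hSsorted : S.Pairwise (· ≤ ·) := List.pairwise_mergeSort' (· ≤ ·) R
  have hSl : S.length = R.length := by rw [hSdef]; exact List.length_mergeSort _
  by_cases hb : b' = -(R.length : ℤ)
  · right
    intro y hy hJ
    apply h
    rw [JN_append_iff, ← hSl] at hJ ⊢
    rcases hJ with h1 | ⟨hb2, _, _, _, _⟩ | ⟨hb3, a, k, hbase, h3⟩
    · exact Or.inl h1
    · exfalso
      rw [hb2, ← hSl] at hb
      have : (S.length : ℤ) = 1 := by omega
      have : S.length = 1 := by exact_mod_cast this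
      omega
    · exact Or.inr (Or.inr ⟨hb3, a, k, hbase, JNC3_mono hSsorted hy h3⟩)
  · left
    intro y hy hJ
    apply h
    rw [JN_append_iff, ← hSl] at hJ ⊢
    rcases hJ with h1 | ⟨hb2, a, k, hbase, h2⟩ | ⟨hb3, _⟩
    · exact Or.inl h1
    · exact Or.inr (Or.inl ⟨hb2, a, k, hbase, JNC2_anti hSsorted hy h2⟩)
    · exact absurd (by rw [hb3, hSl]) hb

lemma isL_int (b : ℤ) (R : List ℚ) (m : ℤ) : IsLspaceParam b R ((m : ℤ) : ℚ) ↔ ¬ JN (b + m) R := by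
  have hex : ∃ z : ℤ, ((m : ℤ) : ℚ) = (z : ℚ) := ⟨m, rfl⟩
  unfold IsLspaceParam
  rw [Int.floor_intCast]
  simp [hex]

lemma isL_frac (b : ℤ) (R : List ℚ) (q : ℚ) (m : ℤ) (h1 : (m : ℚ) < q) (h2 : q < (m : ℚ) + 1) :
    IsLspaceParam b R q ↔ ¬ JN (b + m) (R ++ [q - m]) := by
  have hf : ⌊q⌋ = m := by
    rw [Int.floor_eq_iff]; exact ⟨le_of_lt h1, by exact_mod_cast h2⟩
  have hni : ¬ ∃ z : ℤ, q = (z : ℚ) := by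
    rintro ⟨z, rfl⟩
    rw [Int.floor_intCast] at hf
    subst hf
    exact lt_irrefl _ h1
  unfold IsLspaceParam
  rw [hf]
  simp [hni]

set_option maxHeartbeats 2000000 in
/-- Proposition 5.2 of the paper, expressed arithmetically: for `s ≥ 4`, the family
`Y_n = S²(b; r_1, …, r_{s−1}, (nu+w)/(nt+v))` (with `tw − uv = 1` and `0 ≤ w < v`)
contains infinitely many L-spaces if and only if either `t = 0` or the limit
`Y_∞ = S²(b; r_1, …, r_{s−1}, u/t)` is an L-space. -/
theorem Lspace_family_infinite_iff_limit (s : ℕ) (hs : 4 ≤ s) (b : ℤ) (R : List ℚ)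
    (hlen : R.length = s - 1) (hR : ∀ r ∈ R, 0 < r ∧ r < 1)
    (t u v w : ℤ) (hdet : t * w - u * v = 1) (hw0 : 0 ≤ w) (hwv : w < v) :
    {n : ℤ | n * t + v ≠ 0 ∧
        IsLspaceParam b R (((n * u + w : ℤ) : ℚ) / ((n * t + v : ℤ) : ℚ))}.Infinite ↔
      (t = 0 ∨ IsLspaceParam b R ((u : ℚ) / (t : ℚ))) := by
  have hl3 : 3 ≤ R.length := by omega
  obtain ⟨S, hSdef⟩ : ∃ S, S = R.mergeSort (· ≤ ·) := ⟨_, rfl⟩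
  have hSsorted : S.Pairwise (· ≤ ·) := by rw [hSdef]; exact List.pairwise_mergeSort' (· ≤ ·) R
  have hSl : S.length = R.length := by rw [hSdef]; exact List.length_mergeSort _
  have hSmem : ∀ e ∈ S, 0 < e ∧ e < 1 := by
    intro e he
    rw [hSdef] at he
    exact hR e ((List.mergeSort_perm R _).subset he)
  have hμmem : S.getD 0 0 ∈ S := by
    have h0 : 0 < S.length := by omega
    rw [List.getD_eq_getElem S 0 h0]; exact List.getElem_mem h0
  have hMmem : S.getD (R.length - 1) 0 ∈ S := by
    have h0 : R.length - 1 < S.length := by omega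
    rw [List.getD_eq_getElem S 0 h0]; exact List.getElem_mem h0
  have hμpos : 0 < S.getD 0 0 := (hSmem _ hμmem).1
  have hμlt : S.getD 0 0 < 1 := (hSmem _ hμmem).2
  have hMpos : 0 < S.getD (R.length - 1) 0 := (hSmem _ hMmem).1
  have hMlt : S.getD (R.length - 1) 0 < 1 := (hSmem _ hMmem).2
  rcases eq_or_ne t 0 with ht | ht
  · -- limit is a connected sum of lens spaces: t = 0 forces u = -1, v = 1, w = 0
    subst ht
    have hv1 : 0 < v := by omega
    have hvd : v ∣ 1 := ⟨-u, by linarith⟩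
    have hv : v = 1 := Int.eq_one_of_dvd_one (le_of_lt hv1) hvd
    subst hv
    have hu : u = -1 := by omega
    subst hu
    have hw : w = 0 := by omega
    subst hw
    constructor
    · intro _; exact Or.inl rfl
    · intro _
      refine (Set.Ici_infinite (b + (R.length : ℤ) + 1)).mono fun n hn => ?_
      simp only [Set.mem_Ici] at hn
      refine ⟨by simp, ?_⟩
      have he : ((n * -1 + 0 : ℤ) : ℚ) / ((n * 0 + 1 : ℤ) : ℚ) = ((-n : ℤ) : ℚ) := by
        push_cast; ring
      rw [he, isL_int]
      intro hJN
      rw [JN_def] at hJN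
      rcases hJN with ⟨h1, h2⟩ | ⟨h1, _⟩ | ⟨h1, _⟩ <;> omega
  · -- t ≠ 0
    rw [or_iff_right ht]
    have htQ : (t : ℚ) ≠ 0 := Int.cast_ne_zero.mpr ht
    have ht2 : 1 ≤ t ^ 2 := by
      rcases lt_trichotomy t 0 with h | h | h
      · nlinarith
      · exact absurd h ht
      · nlinarith
    obtain ⟨m, hmdef⟩ : ∃ m : ℤ, m = ⌊(u : ℚ) / (t : ℚ)⌋ := ⟨_, rfl⟩
    obtain ⟨f, hfdef⟩ : ∃ f : ℚ, f = (u : ℚ) / t - (m : ℚ) := ⟨_, rfl⟩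
    have hf0 : 0 ≤ f := by
      rw [hfdef, hmdef]; linarith [Int.floor_le ((u : ℚ) / t)]
    have hf1 : f < 1 := by
      rw [hfdef, hmdef]; linarith [Int.lt_floor_add_one ((u : ℚ) / t)]
    have hut : (u : ℚ) / t = (m : ℚ) + f := by rw [hfdef]; ring
    have qid : ∀ n : ℤ, n * t + v ≠ 0 →
        ((n * u + w : ℤ) : ℚ) / ((n * t + v : ℤ) : ℚ)
          = ((m : ℚ) + f) + ((t * (n * t + v) : ℤ) : ℚ)⁻¹ := by
      intro n hn
      rw [← hut]
      have hd' : (t : ℚ) * w - u * v = 1 := by exact_mod_cast hdet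
      have hn' : ((n : ℚ) * t + v) ≠ 0 := by
        intro h; apply hn; exact_mod_cast h
      push_cast
      field_simp
      ring_nf
      linear_combination hd'
    have tailpos : ∀ δ : ℚ, 0 < δ → ∃ N : ℤ, ∀ n, N ≤ n →
        n * t + v ≠ 0 ∧ 0 < ((t * (n * t + v) : ℤ) : ℚ)⁻¹ ∧
          ((t * (n * t + v) : ℤ) : ℚ)⁻¹ ≤ δ := by
      intro δ hδ
      refine ⟨max 0 (max 1 ⌈δ⁻¹⌉ - t * v), fun n hn => ?_⟩
      have hn0 : 0 ≤ n := le_trans (le_max_left _ _) hn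
      have hnK : max 1 ⌈δ⁻¹⌉ - t * v ≤ n := le_trans (le_max_right _ _) hn
      have hK1 : 1 ≤ max 1 ⌈δ⁻¹⌉ := le_max_left _ _
      have hD : max 1 ⌈δ⁻¹⌉ ≤ t * (n * t + v) := by nlinarith
      have hDpos : 0 < t * (n * t + v) := by omega
      have hnv : n * t + v ≠ 0 := by
        intro h; rw [h, mul_zero] at hDpos; exact lt_irrefl _ hDpos
      have hDQ : (0 : ℚ) < ((t * (n * t + v) : ℤ) : ℚ) := by exact_mod_cast hDpos
      refine ⟨hnv, inv_pos.mpr hDQ, ?_⟩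
      rw [inv_le_comm₀ hDQ hδ]
      calc (δ⁻¹ : ℚ) ≤ (⌈δ⁻¹⌉ : ℚ) := Int.le_ceil _
        _ ≤ ((max 1 ⌈δ⁻¹⌉ : ℤ) : ℚ) := by exact_mod_cast le_max_right 1 ⌈δ⁻¹⌉
        _ ≤ _ := by exact_mod_cast hD
    have tailneg : ∀ δ : ℚ, 0 < δ → ∃ N : ℤ, ∀ n, n ≤ N →
        n * t + v ≠ 0 ∧ ((t * (n * t + v) : ℤ) : ℚ)⁻¹ < 0 ∧
          -δ ≤ ((t * (n * t + v) : ℤ) : ℚ)⁻¹ := by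
      intro δ hδ
      refine ⟨min 0 (-(max 1 ⌈δ⁻¹⌉) - t * v), fun n hn => ?_⟩
      have hn0 : n ≤ 0 := le_trans hn (min_le_left _ _)
      have hnK : n ≤ -(max 1 ⌈δ⁻¹⌉) - t * v := le_trans hn (min_le_right _ _)
      have hK1 : 1 ≤ max 1 ⌈δ⁻¹⌉ := le_max_left _ _
      have hD : t * (n * t + v) ≤ -(max 1 ⌈δ⁻¹⌉) := by nlinarith
      have hDneg : t * (n * t + v) < 0 := by omega
      have hnv : n * t + v ≠ 0 := by
        intro h; rw [h, mul_zero] at hDneg; exact lt_irrefl _ hDneg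
      have hDQ : ((t * (n * t + v) : ℤ) : ℚ) < 0 := by exact_mod_cast hDneg
      refine ⟨hnv, inv_lt_zero.mpr hDQ, ?_⟩
      have hcast : (δ⁻¹ : ℚ) ≤ -((t * (n * t + v) : ℤ) : ℚ) := by
        have h2 : (((max 1 ⌈δ⁻¹⌉ : ℤ)) : ℚ) ≤ -((t * (n * t + v) : ℤ) : ℚ) := by
          have : (max 1 ⌈δ⁻¹⌉ : ℤ) ≤ -(t * (n * t + v)) := by omega
          exact_mod_cast this
        calc (δ⁻¹ : ℚ) ≤ (⌈δ⁻¹⌉ : ℚ) := Int.le_ceil _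
          _ ≤ ((max 1 ⌈δ⁻¹⌉ : ℤ) : ℚ) := by exact_mod_cast le_max_right 1 ⌈δ⁻¹⌉
          _ ≤ _ := h2
      have hpos : (0 : ℚ) < -((t * (n * t + v) : ℤ) : ℚ) := by linarith [Int.le_ceil δ⁻¹]
      have h3 : (-((t * (n * t + v) : ℤ) : ℚ))⁻¹ ≤ δ := by
        rw [inv_le_comm₀ hpos hδ]; exact hcast
      rw [inv_neg] at h3
      linarith
    rcases eq_or_ne f 0 with hfz | hfz
    · -- the limit parameter u/t is an integer
      have hum : (u : ℚ) / t = (m : ℚ) := by rw [hut, hfz, add_zero]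
      rw [hum, isL_int]
      have hAB : ((( -((R.length : ℤ) - 1) ≤ b + m ∧ b + m ≤ -2) ∨
            (b + m = -1 ∧ ∃ a k : ℕ, JNbase a k ∧ JNC2 S R.length a k)) ∧
          ((-((R.length : ℤ) - 1) ≤ b + m - 1 ∧ b + m - 1 ≤ -2) ∨
            (b + m - 1 = -(R.length : ℤ) ∧ ∃ a k : ℕ, JNbase a k ∧ JNC3 S R.length a k)))
          ↔ JN (b + m) R := by
        rw [JN_def, ← hSdef]
        constructor
        · rintro ⟨hA' | hA', hB' | hB'⟩
          · exact Or.inl ⟨by omega, by omega⟩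
          · exact Or.inr (Or.inr ⟨by omega, hB'.2⟩)
          · exact Or.inr (Or.inl ⟨hA'.1, hA'.2⟩)
          · exact absurd hB'.1 (by omega)
        · rintro (⟨h1, h2⟩ | ⟨h1, h2⟩ | ⟨h1, h2⟩)
          · exact ⟨Or.inl ⟨by omega, by omega⟩, Or.inl ⟨by omega, by omega⟩⟩
          · exact ⟨Or.inr ⟨h1, h2⟩, Or.inl ⟨by omega, by omega⟩⟩
          · exact ⟨Or.inl ⟨by omega, by omega⟩, Or.inr ⟨by omega, h2⟩⟩
      constructor
      · -- infinitely many L-spaces implies limit L-space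
        intro hInf
        by_contra hcon
        obtain ⟨hA', hB'⟩ := hAB.mpr hcon
        have hposJN : ∃ δ : ℚ, 0 < δ ∧ δ < 1 ∧
            ∀ e : ℚ, 0 < e → e ≤ δ → JN (b + m) (R ++ [e]) := by
          rcases hA' with h1 | ⟨h1, a, k, hbase, h2⟩
          · refine ⟨min (S.getD 0 0) (1 - S.getD (R.length - 1) 0),
              lt_min hμpos (by linarith), lt_of_le_of_lt (min_le_left _ _) hμlt,
              fun e he hed => ?_⟩
            exact (JN_small_iff hl3 hSdef.symm (le_trans hed (min_le_left _ _))
              (le_trans hed (min_le_right _ _)) _).mpr (Or.inl h1)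
          · have hk := hbase.kpos
            refine ⟨min (min (S.getD 0 0) (1 - S.getD (R.length - 1) 0)) (1 / (2 * (k : ℚ))),
              lt_min (lt_min hμpos (by linarith)) (by positivity),
              lt_of_le_of_lt (le_trans (min_le_left _ _) (min_le_left _ _)) hμlt,
              fun e he hed => ?_⟩
            refine (JN_small_iff hl3 hSdef.symm
              (le_trans hed (le_trans (min_le_left _ _) (min_le_left _ _)))
              (le_trans hed (le_trans (min_le_left _ _) (min_le_right _ _))) _).mpr ?_
            refine Or.inr ⟨h1, a, k, hbase, ?_, h2⟩
            have : (1 : ℚ) / (2 * k) < 1 / k := by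
              rw [div_lt_div_iff₀ (by positivity) (by positivity)]
              nlinarith
            linarith [le_trans hed (min_le_right (min (S.getD 0 0) (1 - S.getD (R.length - 1) 0)) (1 / (2 * (k : ℚ))))]
        have hnegJN : ∃ δ : ℚ, 0 < δ ∧ δ < 1 ∧
            ∀ e : ℚ, 0 < e → e ≤ δ → JN (b + m - 1) (R ++ [1 - e]) := by
          rcases hB' with h1 | ⟨h1, a, k, hbase, h2⟩
          · refine ⟨min (S.getD 0 0) (1 - S.getD (R.length - 1) 0),
              lt_min hμpos (by linarith), lt_of_le_of_lt (min_le_left _ _) hμlt,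
              fun e he hed => ?_⟩
            have he1 : S.getD (R.length - 1) 0 ≤ 1 - e := by
              have := le_trans hed (min_le_right _ _); linarith
            have he2 : 1 - S.getD 0 0 ≤ 1 - e := by
              have := le_trans hed (min_le_left _ _); linarith
            exact (JN_large_iff hl3 hSdef.symm he1 he2 _).mpr (Or.inl h1)
          · have hk := hbase.kpos
            refine ⟨min (min (S.getD 0 0) (1 - S.getD (R.length - 1) 0)) (1 / (2 * (k : ℚ))),
              lt_min (lt_min hμpos (by linarith)) (by positivity),
              lt_of_le_of_lt (le_trans (min_le_left _ _) (min_le_left _ _)) hμlt,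
              fun e he hed => ?_⟩
            have he1 : S.getD (R.length - 1) 0 ≤ 1 - e := by
              have := le_trans hed (le_trans (min_le_left _ _) (min_le_right _ _)); linarith
            have he2 : 1 - S.getD 0 0 ≤ 1 - e := by
              have := le_trans hed (le_trans (min_le_left _ _) (min_le_left _ _)); linarith
            refine (JN_large_iff hl3 hSdef.symm he1 he2 _).mpr (Or.inr ⟨h1, a, k, hbase, ?_, h2⟩)
            have hlt : (1 : ℚ) / (2 * k) < 1 / k := by
              rw [div_lt_div_iff₀ (by positivity) (by positivity)]
              nlinarith
            have := le_trans hed (min_le_right (min (S.getD 0 0) (1 - S.getD (R.length - 1) 0)) (1 / (2 * (k : ℚ))))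
            have hsimp : 1 - (1 - e) = e := by ring
            rw [hsimp]
            linarith
        obtain ⟨δA, hδA, hδA1, hJA⟩ := hposJN
        obtain ⟨δB, hδB, hδB1, hJB⟩ := hnegJN
        obtain ⟨NA, hNA⟩ := tailpos δA hδA
        obtain ⟨NB, hNB⟩ := tailneg δB hδB
        refine hInf ((Set.finite_Icc (NB + 1) (NA - 1)).subset ?_)
        intro n hn
        obtain ⟨hnv, hL⟩ := hn
        simp only [Set.mem_Icc]
        constructor
        · by_contra hc
          push_neg at hc
          obtain ⟨hnv', hεneg, hεge⟩ := hNB n (by omega)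
          rw [qid n hnv, hfz, add_zero] at hL
          obtain ⟨ε, hε⟩ : ∃ e : ℚ, e = ((t * (n * t + v) : ℤ) : ℚ)⁻¹ := ⟨_, rfl⟩
          rw [← hε] at hεneg hεge hL
          rw [isL_frac b R _ (m - 1) (by push_cast; linarith) (by push_cast; linarith)] at hL
          apply hL
          have he1 : (m : ℚ) + ε - ((m - 1 : ℤ) : ℚ) = 1 - (-ε) := by push_cast; ring
          have he2 : b + (m - 1) = b + m - 1 := by ring
          rw [he1, he2]
          exact hJB (-ε) (by linarith) (by linarith)
        · by_contra hc
          push_neg at hc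
          obtain ⟨hnv', hε0, hεδ⟩ := hNA n (by omega)
          rw [qid n hnv, hfz, add_zero] at hL
          obtain ⟨ε, hε⟩ : ∃ e : ℚ, e = ((t * (n * t + v) : ℤ) : ℚ)⁻¹ := ⟨_, rfl⟩
          rw [← hε] at hε0 hεδ hL
          rw [isL_frac b R _ m (by linarith) (by linarith)] at hL
          apply hL
          rw [add_sub_cancel_left]
          exact hJA ε hε0 hεδ
      · -- limit L-space implies infinitely many L-spaces
        intro hnJN
        have hnAB := (not_iff_not.mpr hAB).mpr hnJN
        rcases not_and_or.mp hnAB with hA' | hB'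
        · have hδ : (0:ℚ) < min (S.getD 0 0) (1 - S.getD (R.length - 1) 0) :=
            lt_min hμpos (by linarith)
          obtain ⟨N, hN⟩ := tailpos _ hδ
          refine (Set.Ici_infinite N).mono fun n hn => ?_
          simp only [Set.mem_Ici] at hn
          obtain ⟨hnv, hε0, hεδ⟩ := hN n hn
          refine ⟨hnv, ?_⟩
          rw [qid n hnv, hfz, add_zero]
          obtain ⟨ε, hε⟩ : ∃ e : ℚ, e = ((t * (n * t + v) : ℤ) : ℚ)⁻¹ := ⟨_, rfl⟩
          rw [← hε] at hε0 hεδ ⊢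
          have hεμ : ε ≤ S.getD 0 0 := le_trans hεδ (min_le_left _ _)
          have hεM : ε ≤ 1 - S.getD (R.length - 1) 0 := le_trans hεδ (min_le_right _ _)
          rw [isL_frac b R _ m (by linarith) (by linarith)]
          rw [add_sub_cancel_left]
          intro hJN
          rcases (JN_small_iff hl3 hSdef.symm hεμ hεM _).mp hJN with h1 | ⟨h1, a, k, hbase, _, h2⟩
          · exact hA' (Or.inl h1)
          · exact hA' (Or.inr ⟨h1, a, k, hbase, h2⟩)
        · have hδ : (0:ℚ) < min (S.getD 0 0) (1 - S.getD (R.length - 1) 0) :=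
            lt_min hμpos (by linarith)
          obtain ⟨N, hN⟩ := tailneg _ hδ
          refine (Set.Iic_infinite N).mono fun n hn => ?_
          simp only [Set.mem_Iic] at hn
          obtain ⟨hnv, hεneg, hεge⟩ := hN n hn
          refine ⟨hnv, ?_⟩
          rw [qid n hnv, hfz, add_zero]
          obtain ⟨ε, hε⟩ : ∃ e : ℚ, e = ((t * (n * t + v) : ℤ) : ℚ)⁻¹ := ⟨_, rfl⟩
          rw [← hε] at hεneg hεge ⊢
          have hεμ : -(S.getD 0 0) ≤ ε := by
            have := le_trans (min_le_left (S.getD 0 0) (1 - S.getD (R.length - 1) 0)) (le_refl _)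
            linarith [hεge, min_le_left (S.getD 0 0) (1 - S.getD (R.length - 1) 0)]
          have hεM : -(1 - S.getD (R.length - 1) 0) ≤ ε := by
            linarith [hεge, min_le_right (S.getD 0 0) (1 - S.getD (R.length - 1) 0)]
          rw [isL_frac b R _ (m - 1) (by push_cast; linarith) (by push_cast; linarith)]
          have he1 : (m : ℚ) + ε - ((m - 1 : ℤ) : ℚ) = 1 + ε := by push_cast; ring
          have he2 : b + (m - 1) = b + m - 1 := by ring
          rw [he1, he2]
          intro hJN
          have hx1 : S.getD (R.length - 1) 0 ≤ 1 + ε := by linarith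
          have hx2 : 1 - S.getD 0 0 ≤ 1 + ε := by linarith
          rcases (JN_large_iff hl3 hSdef.symm hx1 hx2 _).mp hJN with h1 | ⟨h1, a, k, hbase, _, h2⟩
          · exact hB' (Or.inl h1)
          · exact hB' (Or.inr ⟨h1, a, k, hbase, h2⟩)
    · -- the limit parameter u/t is not an integer
      have hf0' : 0 < f := lt_of_le_of_ne hf0 (Ne.symm hfz)
      have hRHS : IsLspaceParam b R ((u : ℚ) / t) ↔ ¬ JN (b + m) (R ++ [f]) := by
        rw [hut, isL_frac b R _ m (by linarith) (by linarith), add_sub_cancel_left]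
      rw [hRHS]
      constructor
      · intro hInf
        by_contra hcon
        obtain ⟨δ, hδ, hstab⟩ := JN_stable hl3 hcon
        have hδ'pos : (0:ℚ) < min (δ / 2) (min (f / 2) ((1 - f) / 2)) :=
          lt_min (by linarith) (lt_min (by linarith) (by linarith))
        obtain ⟨NA, hNA⟩ := tailpos _ hδ'pos
        obtain ⟨NB, hNB⟩ := tailneg _ hδ'pos
        refine hInf ((Set.finite_Icc (NB + 1) (NA - 1)).subset ?_)
        intro n hn
        obtain ⟨hnv, hL⟩ := hn
        simp only [Set.mem_Icc]
        constructor
        · by_contra hc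
          push_neg at hc
          obtain ⟨hnv', hεneg, hεge⟩ := hNB n (by omega)
          rw [qid n hnv] at hL
          obtain ⟨ε, hε⟩ : ∃ e : ℚ, e = ((t * (n * t + v) : ℤ) : ℚ)⁻¹ := ⟨_, rfl⟩
          rw [← hε] at hεneg hεge hL
          have hb1 : -(δ/2) ≤ ε := by
            have := min_le_left (δ / 2) (min (f / 2) ((1 - f) / 2)); linarith
          have hb2 : -(f/2) ≤ ε := by
            have h1 := min_le_right (δ / 2) (min (f / 2) ((1 - f) / 2))
            have h2 := min_le_left (f / 2) ((1 - f) / 2)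
            linarith
          rw [isL_frac b R _ m (by linarith) (by linarith)] at hL
          apply hL
          have he1 : (m : ℚ) + f + ε - (m : ℚ) = f + ε := by ring
          rw [he1]
          apply hstab
          have he2 : f + ε - f = ε := by ring
          rw [he2, abs_lt]
          constructor <;> linarith
        · by_contra hc
          push_neg at hc
          obtain ⟨hnv', hε0, hεδ⟩ := hNA n (by omega)
          rw [qid n hnv] at hL
          obtain ⟨ε, hε⟩ : ∃ e : ℚ, e = ((t * (n * t + v) : ℤ) : ℚ)⁻¹ := ⟨_, rfl⟩
          rw [← hε] at hε0 hεδ hL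
          have hb1 : ε ≤ δ/2 := le_trans hεδ (min_le_left _ _)
          have hb2 : ε ≤ (1-f)/2 := le_trans hεδ (le_trans (min_le_right _ _) (min_le_right _ _))
          rw [isL_frac b R _ m (by linarith) (by linarith)] at hL
          apply hL
          have he1 : (m : ℚ) + f + ε - (m : ℚ) = f + ε := by ring
          rw [he1]
          apply hstab
          have he2 : f + ε - f = ε := by ring
          rw [he2, abs_lt]
          constructor <;> linarith
      · intro hnot
        rcases JN_onesided hl3 hnot with hup | hdown
        · obtain ⟨N, hN⟩ := tailpos ((1 - f) / 2) (by linarith)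
          refine (Set.Ici_infinite N).mono fun n hn => ?_
          simp only [Set.mem_Ici] at hn
          obtain ⟨hnv, hε0, hεδ⟩ := hN n hn
          refine ⟨hnv, ?_⟩
          rw [qid n hnv]
          obtain ⟨ε, hε⟩ : ∃ e : ℚ, e = ((t * (n * t + v) : ℤ) : ℚ)⁻¹ := ⟨_, rfl⟩
          rw [← hε] at hε0 hεδ ⊢
          rw [isL_frac b R _ m (by linarith) (by linarith)]
          have he1 : (m : ℚ) + f + ε - (m : ℚ) = f + ε := by ring
          rw [he1]
          exact hup (f + ε) (by linarith)
        · obtain ⟨N, hN⟩ := tailneg (f / 2) (by linarith)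
          refine (Set.Iic_infinite N).mono fun n hn => ?_
          simp only [Set.mem_Iic] at hn
          obtain ⟨hnv, hεneg, hεge⟩ := hN n hn
          refine ⟨hnv, ?_⟩
          rw [qid n hnv]
          obtain ⟨ε, hε⟩ : ∃ e : ℚ, e = ((t * (n * t + v) : ℤ) : ℚ)⁻¹ := ⟨_, rfl⟩
          rw [← hε] at hεneg hεge ⊢
          rw [isL_frac b R _ m (by linarith) (by linarith)]
          have he1 : (m : ℚ) + f + ε - (m : ℚ) = f + ε := by ring
          rw [he1]
          exact hdown (f + ε) (by linarith)
end
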